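/- arXiv:1803.10113 — 2 statements merged into one kernel-verified Lean document; each statement's English description precedes it below -/
import Mathlib

section
/- In EFF propositional truncation exists: every fibration f: B → A factors as a map g: B → C followed by a propositional fibration h: C → A (i.e., a fibration of (−1)-types), universally: if g': B → C' and h': C' → A is another such factorisation with h' a propositional fibration, then there exists a map d: C → C' over A with dg ≃_A g', and any two such maps d are fibrewise homotopic over A. Concretely, for f: (B, β, ℬ) → (A, α, 𝒜) one may take C := (B, β, 𝒞) with 𝒞(b,b') = 𝒜(fb, fb'). -/
namespace EffPaper

/-! ### A small kit for tracking by partial computable functions.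

We encode "partial computable function" via Mathlib's `Partrec` on `ℕ →. ℕ`.
`CompComputes I O` says: there is a partial computable function which, on the input
`I x`, converges and outputs `O x` (for every `x` in some index type `X`).
`CompFinds I S` says: there is a partial computable function which, on the input
`I x`, converges and outputs some element of the set `S x`. -/

def CompComputes {X : Sort*} (I O : X → ℕ) : Prop :=
  ∃ F : ℕ →. ℕ, Partrec F ∧ ∀ x, O x ∈ F (I x)

def CompFinds {X : Sort*} (I : X → ℕ) (S : X → Set ℕ) : Prop :=
  ∃ F : ℕ →. ℕ, Partrec F ∧ ∀ x, ∃ k, k ∈ F (I x) ∧ k ∈ S x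

namespace CompComputes

protected theorem id {X : Sort*} (I : X → ℕ) : CompComputes I I :=
  ⟨fun n => Part.some n, Partrec.some, fun x => Part.mem_some _⟩

protected theorem const {X : Sort*} (I : X → ℕ) (c : ℕ) : CompComputes I fun _ => c :=
  ⟨fun _ => Part.some c, (Computable.const c).partrec, fun _ => Part.mem_some _⟩

protected theorem comp {X : Sort*} {I M O : X → ℕ}
    (h₂ : CompComputes M O) (h₁ : CompComputes I M) : CompComputes I O := by
  obtain ⟨F₁, pF₁, s₁⟩ := h₁
  obtain ⟨F₂, pF₂, s₂⟩ := h₂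
  refine ⟨fun n => (F₁ n).bind F₂, pF₁.bind (pF₂.comp Computable.snd), fun x => ?_⟩
  exact Part.mem_bind_iff.mpr ⟨M x, s₁ x, s₂ x⟩

protected theorem pair {X : Sort*} {I a b : X → ℕ}
    (ha : CompComputes I a) (hb : CompComputes I b) :
    CompComputes I (fun x => Nat.pair (a x) (b x)) := by
  obtain ⟨F₁, pF₁, s₁⟩ := ha
  obtain ⟨F₂, pF₂, s₂⟩ := hb
  refine ⟨fun n => (F₁ n).bind fun u => (F₂ n).map fun v => Nat.pair u v, ?_, fun x => ?_⟩
  · refine pF₁.bind ?_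
    have : Computable₂ fun (p : ℕ × ℕ) (v : ℕ) => Nat.pair p.2 v :=
      Primrec₂.to_comp (Primrec₂.natPair.comp (Primrec.snd.comp Primrec.fst) Primrec.snd)
    exact Partrec.map (pF₂.comp Computable.fst) this
  · exact Part.mem_bind_iff.mpr ⟨a x, s₁ x, (Part.mem_map_iff _).mpr ⟨b x, s₂ x, rfl⟩⟩

protected theorem unpairL {X : Sort*} (I : X → ℕ) :
    CompComputes I (fun x => (I x).unpair.1) :=
  ⟨fun n => Part.some n.unpair.1,
    (Primrec.to_comp (Primrec.fst.comp Primrec.unpair)).partrec, fun _ => Part.mem_some _⟩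

protected theorem unpairR {X : Sort*} (I : X → ℕ) :
    CompComputes I (fun x => (I x).unpair.2) :=
  ⟨fun n => Part.some n.unpair.2,
    (Primrec.to_comp (Primrec.snd.comp Primrec.unpair)).partrec, fun _ => Part.mem_some _⟩

protected theorem projL {X : Sort*} (a b : X → ℕ) :
    CompComputes (fun x => Nat.pair (a x) (b x)) a := by
  have := CompComputes.unpairL (X := X) (fun x => Nat.pair (a x) (b x))
  simpa [Nat.unpair_pair] using this

protected theorem projR {X : Sort*} (a b : X → ℕ) :
    CompComputes (fun x => Nat.pair (a x) (b x)) b := by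
  have := CompComputes.unpairR (X := X) (fun x => Nat.pair (a x) (b x))
  simpa [Nat.unpair_pair] using this

protected theorem precomp {X Y : Sort*} {I O : X → ℕ} (h : CompComputes I O) (e : Y → X) :
    CompComputes (fun y => I (e y)) (fun y => O (e y)) := by
  obtain ⟨F, pF, s⟩ := h
  exact ⟨F, pF, fun y => s (e y)⟩

protected theorem toFinds {X : Sort*} {I o : X → ℕ} {S : X → Set ℕ}
    (h : CompComputes I o) (hm : ∀ x, o x ∈ S x) : CompFinds I S := by
  obtain ⟨F, pF, s⟩ := h
  exact ⟨F, pF, fun x => ⟨o x, s x, hm x⟩⟩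


protected theorem congr {X : Sort*} {I O O' : X → ℕ}
    (h : CompComputes I O) (he : ∀ x, O x = O' x) : CompComputes I O' := by
  obtain ⟨F, pF, s⟩ := h
  exact ⟨F, pF, fun x => he x ▸ s x⟩


/-- Values tracked by a partial computable function are determined by the input. -/
protected theorem determined {X : Sort*} {I O : X → ℕ} (h : CompComputes I O)
    {x y : X} (hxy : I x = I y) : O x = O y := by
  obtain ⟨F, pF, s⟩ := h
  exact Part.mem_unique (s x) (hxy ▸ s y)

end CompComputes

namespace CompFinds

protected theorem toComputes {X : Sort*} {I : X → ℕ} {S : X → Set ℕ} (h : CompFinds I S) :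
    ∃ o : X → ℕ, (∀ x, o x ∈ S x) ∧ CompComputes I o := by
  obtain ⟨F, pF, s⟩ := h
  refine ⟨fun x => (s x).choose, fun x => (s x).choose_spec.2, F, pF, fun x => (s x).choose_spec.1⟩

/-- Reindex a `CompFinds` along `e` and chase the input through a computable function. -/
protected theorem via {Y X : Sort*} {J : X → ℕ} {S : X → Set ℕ} (h : CompFinds J S)
    {I : Y → ℕ} (e : Y → X) (hc : CompComputes I (fun y => J (e y))) :
    CompFinds I (fun y => S (e y)) := by
  obtain ⟨o, hm, hcc⟩ := h.toComputes
  exact CompComputes.toFinds ((hcc.precomp e).comp hc) (fun y => hm (e y))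

end CompFinds

end EffPaper

namespace EffPaper

open CategoryTheory

universe v u

/-! ### Path categories (Van den Berg–Moerdijk style), abstractly.

A `PathStruct` on a category is a pair of classes of maps: fibrations and equivalences.
`IsPathCategory` expresses the seven axioms of a path category. -/

structure PathStruct (C : Type u) [Category.{v} C] where
  Fib : ∀ ⦃X Y : C⦄, (X ⟶ Y) → Prop
  Eqv : ∀ ⦃X Y : C⦄, (X ⟶ Y) → Prop

section PathCatDefs

variable {C : Type u} [Category.{v} C]

/-- `T` is a terminal object. -/
def IsTerminalObj (T : C) : Prop := ∀ Z : C, ∃ f : Z ⟶ T, ∀ g : Z ⟶ T, g = f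

/-- The square with projections `p₁, p₂` is a pullback of the cospan `f, g`. -/
def IsPB {P X Y Z : C} (p₁ : P ⟶ X) (p₂ : P ⟶ Y) (f : X ⟶ Z) (g : Y ⟶ Z) : Prop :=
  p₁ ≫ f = p₂ ≫ g ∧ ∀ (Q : C) (q₁ : Q ⟶ X) (q₂ : Q ⟶ Y), q₁ ≫ f = q₂ ≫ g →
    ∃! h : Q ⟶ P, h ≫ p₁ = q₁ ∧ h ≫ p₂ = q₂

/-- `p₁, p₂` exhibit their common domain as a binary product of `X` and `Y`. -/
def IsBinProd {P X Y : C} (p₁ : P ⟶ X) (p₂ : P ⟶ Y) : Prop :=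
  ∀ (Q : C) (q₁ : Q ⟶ X) (q₂ : Q ⟶ Y), ∃! h : Q ⟶ P, h ≫ p₁ = q₁ ∧ h ≫ p₂ = q₂

variable (S : PathStruct C)

/-- `X → PX → X × X` is a path object for `X`: the first map is an equivalence, the
second (the pairing of `s` and `t` into a binary product `X × X`) is a fibration,
and the composite is the diagonal. -/
def IsPathObj {X PX : C} (r : X ⟶ PX) (s t : PX ⟶ X) : Prop :=
  S.Eqv r ∧ r ≫ s = 𝟙 X ∧ r ≫ t = 𝟙 X ∧
  ∃ (W : C) (π₁ π₂ : W ⟶ X) (h : PX ⟶ W),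
    IsBinProd π₁ π₂ ∧ h ≫ π₁ = s ∧ h ≫ π₂ = t ∧ S.Fib h

/-- A path object for `p : X ⟶ I` in the slice path category `C(I)`:
a factorisation of the fibrewise diagonal `X ⟶ X ×_I X` as an equivalence `r`
followed by a fibration. -/
def IsRelPathObj {X I PX : C} (p : X ⟶ I) (r : X ⟶ PX) (s t : PX ⟶ X) : Prop :=
  S.Eqv r ∧ r ≫ s = 𝟙 X ∧ r ≫ t = 𝟙 X ∧ s ≫ p = t ≫ p ∧
  ∃ (W : C) (π₁ π₂ : W ⟶ X) (h : PX ⟶ W),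
    IsPB π₁ π₂ p p ∧ h ≫ π₁ = s ∧ h ≫ π₂ = t ∧ S.Fib h

/-- The seven axioms for a path category. -/
structure IsPathCategory : Prop where
  fib_of_iso : ∀ {X Y : C} (f : X ⟶ Y), IsIso f → S.Fib f
  fib_comp : ∀ {X Y Z : C} (f : X ⟶ Y) (g : Y ⟶ Z), S.Fib f → S.Fib g → S.Fib (f ≫ g)
  terminal : ∃ T : C, IsTerminalObj T ∧ ∀ (X : C) (f : X ⟶ T), S.Fib f
  pullback : ∀ {X Y Z : C} (f : X ⟶ Z) (g : Y ⟶ Z), S.Fib f →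
    ∃ (P : C) (p₁ : P ⟶ X) (p₂ : P ⟶ Y), IsPB p₁ p₂ f g ∧ S.Fib p₂
  eqv_of_iso : ∀ {X Y : C} (f : X ⟶ Y), IsIso f → S.Eqv f
  two_out_of_six : ∀ {X Y Z W : C} (f : X ⟶ Y) (g : Y ⟶ Z) (h : Z ⟶ W),
    S.Eqv (f ≫ g) → S.Eqv (g ≫ h) →
    S.Eqv f ∧ S.Eqv g ∧ S.Eqv h ∧ S.Eqv (f ≫ g ≫ h)
  path_obj : ∀ X : C, ∃ (PX : C) (r : X ⟶ PX) (s t : PX ⟶ X), IsPathObj S r s t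
  triv_fib_pb : ∀ {X Y Z P : C} (f : X ⟶ Z) (g : Y ⟶ Z) (p₁ : P ⟶ X) (p₂ : P ⟶ Y),
    S.Fib f → S.Eqv f → IsPB p₁ p₂ f g → S.Fib p₂ ∧ S.Eqv p₂
  triv_fib_sect : ∀ {X Y : C} (f : X ⟶ Y), S.Fib f → S.Eqv f → ∃ s : Y ⟶ X, s ≫ f = 𝟙 Y

/-- Two parallel maps are homotopic: `(f,g)` factors through some path object. -/
def Homotopic {Z X : C} (f g : Z ⟶ X) : Prop :=
  ∃ (PX : C) (r : X ⟶ PX) (s t : PX ⟶ X), IsPathObj S r s t ∧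
    ∃ H : Z ⟶ PX, H ≫ s = f ∧ H ≫ t = g

/-- `f` and `g` are fibrewise homotopic over the codomain of `p`:
`(f,g)` factors through some path object of `p` in the slice. -/
def FibHomotopic {Z X I : C} (p : X ⟶ I) (f g : Z ⟶ X) : Prop :=
  ∃ (PX : C) (r : X ⟶ PX) (s t : PX ⟶ X), IsRelPathObj S p r s t ∧
    ∃ H : Z ⟶ PX, H ≫ s = f ∧ H ≫ t = g

/-- `IsNTypeFib S n f` says that `f` is a fibration of `(n-2)`-types; so `n = 0`
corresponds to hlevel `-2` (trivial fibrations), `n = 1` to propositions,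
`n = 2` to sets and `n = 3` to groupoids. -/
def IsNTypeFib : ℕ → ∀ ⦃Y X : C⦄, (Y ⟶ X) → Prop
  | 0, _, _, f => S.Fib f ∧ S.Eqv f
  | n+1, Y, _, f => S.Fib f ∧ ∃ (PY W : C) (r : Y ⟶ PY) (s t : PY ⟶ Y)
      (π₁ π₂ : W ⟶ Y) (h : PY ⟶ W),
      IsRelPathObj S f r s t ∧ IsPB π₁ π₂ f f ∧ h ≫ π₁ = s ∧ h ≫ π₂ = t ∧
      IsNTypeFib n h

/-- The (strictly) commutative square with vertical fibrations `g` (left) and `f` (right),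
top `top` and bottom `bot`, is a homotopy pullback: the induced map to the actual
pullback is an equivalence. -/
def IsHomotopyPB {D Cc B A : C} (g : D ⟶ Cc) (top : D ⟶ B) (f : B ⟶ A) (bot : Cc ⟶ A) :
    Prop :=
  g ≫ bot = top ≫ f ∧ ∃ (P : C) (p₁ : P ⟶ Cc) (p₂ : P ⟶ B) (h : D ⟶ P),
    IsPB p₁ p₂ bot f ∧ h ≫ p₁ = g ∧ h ≫ p₂ = top ∧ S.Eqv h

/-- A transport structure on the fibration `p : Y ⟶ X`, relative to the path object
`(PX, r, s, t)` and the pullback `(Q, q₁, q₂)` of `s : PX ⟶ X` along `p`: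
a map `Γ : Y ×_X PX ⟶ Y` with `p ∘ Γ = t ∘ q₂` and `Γ ∘ (1_Y, r ∘ p) ≃_X 1_Y`. -/
def IsTransport {Y X PX Q : C} (p : Y ⟶ X) (r : X ⟶ PX) (s t : PX ⟶ X)
    (q₁ : Q ⟶ Y) (q₂ : Q ⟶ PX) (Γ : Q ⟶ Y) : Prop :=
  Γ ≫ p = q₂ ≫ t ∧
  ∀ j : Y ⟶ Q, j ≫ q₁ = 𝟙 Y → j ≫ q₂ = p ≫ r → FibHomotopic S p (j ≫ Γ) (𝟙 Y)

/-- A fibration `p : Y ⟶ X` is univalent: whenever `f, g : Z ⟶ X` and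
`w : f*p ⟶ g*p` is an equivalence over `Z`, there is a homotopy `H` from `f` to `g`
such that `w` is fibrewise homotopic over `Z` to the map induced by `H` and a
transport structure on `p`. -/
def Univalent {Y X : C} (p : Y ⟶ X) : Prop :=
  ∀ {Z Zf Zg : C} (f g : Z ⟶ X) (a₁ : Zf ⟶ Z) (a₂ : Zf ⟶ Y) (b₁ : Zg ⟶ Z) (b₂ : Zg ⟶ Y),
    IsPB a₁ a₂ f p → IsPB b₁ b₂ g p →
    ∀ w : Zf ⟶ Zg, w ≫ b₁ = a₁ → S.Eqv w →
    ∃ (PX Q : C) (r : X ⟶ PX) (s t : PX ⟶ X) (q₁ : Q ⟶ Y) (q₂ : Q ⟶ PX) (Γ : Q ⟶ Y)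
      (H : Z ⟶ PX) (k : Zf ⟶ Q) (w' : Zf ⟶ Zg),
      IsPathObj S r s t ∧ IsPB q₁ q₂ p s ∧ IsTransport S p r s t q₁ q₂ Γ ∧
      H ≫ s = f ∧ H ≫ t = g ∧
      k ≫ q₁ = a₂ ∧ k ≫ q₂ = a₁ ≫ H ∧
      w' ≫ b₁ = a₁ ∧ w' ≫ b₂ = k ≫ Γ ∧
      FibHomotopic S b₁ w w'

/-- `π : E ⟶ U` is a representation for the class `Small`: it is small, and every
small fibration is a homotopy pullback of it. -/
def IsRepresentation (Small : ∀ ⦃X Y : C⦄, (X ⟶ Y) → Prop) {E U : C} (π : E ⟶ U) : Prop :=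
  Small π ∧ ∀ ⦃B A : C⦄ (f : B ⟶ A), Small f →
    ∃ (c : A ⟶ U) (top : B ⟶ E), IsHomotopyPB S f top π c

/-- `M` is a good lift for the universal property of the homotopy Π-type
`(pE, u₁, u₂, ε)` of `g` along `f`, at the map `h : A ⟶ X` with chosen pullback
`(Ah, v₁, v₂)` of `h` along `f` and `m : f*h ⟶ g` over `Y`. -/
def HPiLiftGood {Y X Z E F A Ah : C} (f : Y ⟶ X) (g : Z ⟶ Y) (pE : E ⟶ X)
    (u₁ : F ⟶ E) (u₂ : F ⟶ Y) (ε : F ⟶ Z)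
    (h : A ⟶ X) (v₁ : Ah ⟶ A) (v₂ : Ah ⟶ Y) (m : Ah ⟶ Z) (M : A ⟶ E) : Prop :=
  M ≫ pE = h ∧ ∀ fM : Ah ⟶ F, fM ≫ u₁ = v₁ ≫ M → fM ≫ u₂ = v₂ →
    FibHomotopic S g (fM ≫ ε) m

/-- `(pE, u₁, u₂, ε)` is a homotopy Π-type of the fibration `g : Z ⟶ Y` along the
fibration `f : Y ⟶ X`.  Here `pE : E ⟶ X` is the Π-fibration, `(F, u₁, u₂)` is a
pullback of `pE` along `f`, and `ε : f*pE ⟶ g` is the counit (a map over `Y`). -/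
structure IsHPi {Y X Z E F : C} (f : Y ⟶ X) (g : Z ⟶ Y) (pE : E ⟶ X)
    (u₁ : F ⟶ E) (u₂ : F ⟶ Y) (ε : F ⟶ Z) : Prop where
  fib : S.Fib pE
  pb : IsPB u₁ u₂ pE f
  over' : ε ≫ g = u₂
  lift : ∀ {A Ah : C} (h : A ⟶ X) (v₁ : Ah ⟶ A) (v₂ : Ah ⟶ Y), IsPB v₁ v₂ h f →
    ∀ m : Ah ⟶ Z, m ≫ g = v₂ →
      ∃ M : A ⟶ E, HPiLiftGood S f g pE u₁ u₂ ε h v₁ v₂ m M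
  unique : ∀ {A Ah : C} (h : A ⟶ X) (v₁ : Ah ⟶ A) (v₂ : Ah ⟶ Y), IsPB v₁ v₂ h f →
    ∀ m : Ah ⟶ Z, m ≫ g = v₂ → ∀ M M' : A ⟶ E,
      HPiLiftGood S f g pE u₁ u₂ ε h v₁ v₂ m M →
      HPiLiftGood S f g pE u₁ u₂ ε h v₁ v₂ m M' →
      FibHomotopic S pE M M'

/-- The path category has homotopy Π-types. -/
def HasHPi : Prop := ∀ ⦃Y X Z : C⦄ (f : Y ⟶ X) (g : Z ⟶ Y), S.Fib f → S.Fib g →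
  ∃ (E F : C) (pE : E ⟶ X) (u₁ : F ⟶ E) (u₂ : F ⟶ Y) (ε : F ⟶ Z),
    IsHPi S f g pE u₁ u₂ ε

/-- A class of small fibrations: contained in the fibrations, containing all
isomorphisms, closed under composition and stable under homotopy pullback. -/
def IsSmallClass (Small : ∀ ⦃X Y : C⦄, (X ⟶ Y) → Prop) : Prop :=
  (∀ ⦃X Y : C⦄ (f : X ⟶ Y), Small f → S.Fib f) ∧
  (∀ ⦃X Y : C⦄ (f : X ⟶ Y), IsIso f → Small f) ∧
  (∀ ⦃X Y Z : C⦄ (f : X ⟶ Y) (g : Y ⟶ Z), Small f → Small g → Small (f ≫ g)) ∧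
  (∀ ⦃D Cc B A : C⦄ (g : D ⟶ Cc) (top : D ⟶ B) (f : B ⟶ A) (bot : Cc ⟶ A),
    S.Fib g → S.Fib f → Small f → IsHomotopyPB S g top f bot → Small g)

/-- The class `Small` is closed under homotopy Π-types along arbitrary fibrations:
it is impredicative (polymorphic). -/
def ClosedUnderHPi (Small : ∀ ⦃X Y : C⦄, (X ⟶ Y) → Prop) : Prop :=
  ∀ ⦃Y X Z : C⦄ (f : Y ⟶ X) (g : Z ⟶ Y), S.Fib f → Small g →
    ∀ ⦃E F : C⦄ (pE : E ⟶ X) (u₁ : F ⟶ E) (u₂ : F ⟶ Y) (ε : F ⟶ Z),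
      IsHPi S f g pE u₁ u₂ ε → Small pE

end PathCatDefs

end EffPaper
open CategoryTheory
namespace EffPaper
-- [assume p1 kit present]

/-! ### The category `EFF`. -/

/-- An object of `EFF`: a set `A`, a realizer function `α : A → ℕ`, sets of 1-cells
`hom a a' ⊆ ℕ`, and partial computable functions computing identity, inverse and
composite 1-cells from the realizers of the relevant data. -/
structure EffObj : Type 1 where
  A : Type
  α : A → ℕ
  hom : A → A → Set ℕ
  idc : CompFinds (fun a : A => α a) (fun a => hom a a)
  invc : CompFinds
    (fun x : {p : A × A × ℕ // p.2.2 ∈ hom p.1 p.2.1} =>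
      Nat.pair (α x.1.1) (Nat.pair (α x.1.2.1) x.1.2.2))
    (fun x => hom x.1.2.1 x.1.1)
  compc : CompFinds
    (fun x : {p : A × A × A × ℕ × ℕ //
        p.2.2.2.1 ∈ hom p.1 p.2.1 ∧ p.2.2.2.2 ∈ hom p.2.1 p.2.2.1} =>
      Nat.pair (α x.1.1) (Nat.pair (α x.1.2.1) (Nat.pair (α x.1.2.2.1)
        (Nat.pair x.1.2.2.2.1 x.1.2.2.2.2))))
    (fun x => hom x.1.1 x.1.2.2.1)

/-- The 1-cells of an object of `EFF` between `a` and `a'`. -/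
def EffObj.Cell (A : EffObj) (a a' : A.A) : Type := {n : ℕ // n ∈ A.hom a a'}

/-- A morphism of `EFF`: a function on 0-cells and functions on 1-cells, both
computably tracked. -/
structure EffHom (B A : EffObj) : Type where
  f0 : B.A → A.A
  f1 : ∀ b b' : B.A, B.Cell b b' → A.Cell (f0 b) (f0 b')
  tr0 : CompComputes (fun b : B.A => B.α b) (fun b => A.α (f0 b))
  tr1 : CompComputes
    (fun x : (b : B.A) × (b' : B.A) × B.Cell b b' =>
      Nat.pair (B.α x.1) (Nat.pair (B.α x.2.1) x.2.2.val))
    (fun x => (f1 x.1 x.2.1 x.2.2).val)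

instance : Category.{0} EffObj where
  Hom B A := EffHom B A
  id A :=
    { f0 := fun a => a
      f1 := fun _ _ π => π
      tr0 := CompComputes.id _
      tr1 := (CompComputes.projR _ _).comp (CompComputes.projR _ _) }
  comp {X Y Z} f g :=
    { f0 := fun b => g.f0 (f.f0 b)
      f1 := fun b b' π => g.f1 _ _ (f.f1 b b' π)
      tr0 := (g.tr0.precomp f.f0).comp f.tr0
      tr1 := by
        have hg := g.tr1.precomp
          (fun x : (b : X.A) × (b' : X.A) × X.Cell b b' =>
            (⟨f.f0 x.1, f.f0 x.2.1, f.f1 x.1 x.2.1 x.2.2⟩ :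
              (b : Y.A) × (b' : Y.A) × Y.Cell b b'))
        refine hg.comp ?_
        refine CompComputes.pair ?_ (CompComputes.pair ?_ f.tr1)
        · exact (f.tr0.precomp (fun x : (b : X.A) × (b' : X.A) × X.Cell b b' => x.1)).comp (CompComputes.projL _ _)
        · exact (f.tr0.precomp (fun x : (b : X.A) × (b' : X.A) × X.Cell b b' => x.2.1)).comp
            ((CompComputes.projL _ _).comp (CompComputes.projR _ _)) }

end EffPaper
namespace EffPaper
open CategoryTheory

/-! ### Homotopies, equivalences and fibrations in `EFF`. -/

/-- Two parallel maps in `EFF` are homotopic if there is a partial computable function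
computing, from the realizer of each `b`, a 1-cell from `f b` to `g b`. -/
def EffHomotopic {B A : EffObj} (f g : EffHom B A) : Prop :=
  CompFinds (fun b : B.A => B.α b) (fun b => A.hom (f.f0 b) (g.f0 b))

/-- A map in `EFF` is a (homotopy) equivalence if it has a homotopy inverse. -/
def EffEqv {B A : EffObj} (f : B ⟶ A) : Prop :=
  ∃ g : A ⟶ B, EffHomotopic (f ≫ g) (𝟙 B) ∧ EffHomotopic (g ≫ f) (𝟙 A)

/-- A map in `EFF` is a fibration: (i) 1-cells `π : f b → a` downstairs can be
computably lifted to 1-cells `ρ : b → b'` upstairs with `f b' = a`, `f ρ = π`;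
(ii) given `ρ ∈ ℬ(b,b')` and `π ∈ 𝒜(fb,fb')` one can compute `ρ' ∈ ℬ(b,b')`
with `f ρ' = π`. -/
def EffFib {B A : EffObj} (f : B ⟶ A) : Prop :=
  (∃ φ ψ : ℕ →. ℕ, Partrec φ ∧ Partrec ψ ∧
    ∀ (b : B.A) (a : A.A) (π : ℕ), π ∈ A.hom (f.f0 b) a →
      ∃ (b' : B.A) (ρ : B.Cell b b'),
        f.f0 b' = a ∧ (f.f1 b b' ρ).val = π ∧
        B.α b' ∈ φ (Nat.pair (B.α b) (Nat.pair (A.α a) π)) ∧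
        ρ.val ∈ ψ (Nat.pair (B.α b) (Nat.pair (A.α a) π))) ∧
  (∃ χ : ℕ →. ℕ, Partrec χ ∧
    ∀ (b b' : B.A) (ρ : B.Cell b b') (π : ℕ), π ∈ A.hom (f.f0 b) (f.f0 b') →
      ∃ ρ' : B.Cell b b', (f.f1 b b' ρ').val = π ∧
        ρ'.val ∈ χ (Nat.pair (B.α b) (Nat.pair (B.α b') (Nat.pair ρ.val π))))

/-- The path structure on `EFF`: fibrations and (homotopy) equivalences. -/
def EffPS : PathStruct EffObj where
  Fib := fun {_ _} f => EffFib f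
  Eqv := fun {_ _} f => EffEqv f

/-- A fibration in `EFF` is a standard discrete fibration if elements of the domain
are determined by their image and their realizer. -/
def EffStdDisc {B A : EffObj} (f : B ⟶ A) : Prop :=
  EffFib f ∧ ∀ b b' : B.A, f.f0 b = f.f0 b' → B.α b = B.α b' → b = b'

/-- A fibration in `EFF` is discrete if it can be written as a standard discrete
fibration after an equivalence. -/
def EffDisc {B A : EffObj} (f : B ⟶ A) : Prop :=
  EffFib f ∧ ∃ (B' : EffObj) (w : B ⟶ B') (g : B' ⟶ A),
    EffEqv w ∧ EffStdDisc g ∧ w ≫ g = f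

end EffPaper
namespace EffPaper
open CategoryTheory

/-! ### Propositional truncation in `EFF`, concretely. -/

/-- The propositional truncation of a map `f : B ⟶ A` in `EFF`: the object
`C := (B, β, 𝒞)` with `𝒞(b,b') = 𝒜(fb,fb')`. -/
def PropTrunc {B A : EffObj} (f : B ⟶ A) : EffObj where
  A := B.A
  α := B.α
  hom := fun b b' => A.hom (f.f0 b) (f.f0 b')
  idc := by
    obtain ⟨o, omem, occ⟩ := A.idc.toComputes
    exact ((occ.precomp f.f0).comp f.tr0).toFinds (fun b => omem (f.f0 b))
  invc := by
    obtain ⟨iv, ivmem, ivcc⟩ := A.invc.toComputes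
    set T := {p : B.A × B.A × ℕ // p.2.2 ∈ A.hom (f.f0 p.1) (f.f0 p.2.1)}
    let e : T → {p : A.A × A.A × ℕ // p.2.2 ∈ A.hom p.1 p.2.1} :=
      fun q => ⟨⟨f.f0 q.1.1, f.f0 q.1.2.1, q.1.2.2⟩, q.2⟩
    refine ((ivcc.precomp e).comp ?_).toFinds (fun q => ivmem (e q))
    refine CompComputes.pair ?_ (CompComputes.pair ?_ ?_)
    · exact (f.tr0.precomp (fun q : T => q.1.1)).comp (CompComputes.projL _ _)
    · exact (f.tr0.precomp (fun q : T => q.1.2.1)).comp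
        ((CompComputes.projL _ _).comp (CompComputes.projR _ _))
    · exact (CompComputes.projR _ _).comp (CompComputes.projR _ _)
  compc := by
    obtain ⟨cp, cpmem, cpcc⟩ := A.compc.toComputes
    set T := {p : B.A × B.A × B.A × ℕ × ℕ //
      p.2.2.2.1 ∈ A.hom (f.f0 p.1) (f.f0 p.2.1) ∧
      p.2.2.2.2 ∈ A.hom (f.f0 p.2.1) (f.f0 p.2.2.1)}
    let e : T → {p : A.A × A.A × A.A × ℕ × ℕ //
        p.2.2.2.1 ∈ A.hom p.1 p.2.1 ∧ p.2.2.2.2 ∈ A.hom p.2.1 p.2.2.1} :=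
      fun q => ⟨⟨f.f0 q.1.1, f.f0 q.1.2.1, f.f0 q.1.2.2.1, q.1.2.2.2.1, q.1.2.2.2.2⟩, q.2⟩
    refine ((cpcc.precomp e).comp ?_).toFinds (fun q => cpmem (e q))
    refine CompComputes.pair ?_ (CompComputes.pair ?_ (CompComputes.pair ?_ ?_))
    · exact (f.tr0.precomp (fun q : T => q.1.1)).comp (CompComputes.projL _ _)
    · exact (f.tr0.precomp (fun q : T => q.1.2.1)).comp
        ((CompComputes.projL _ _).comp (CompComputes.projR _ _))
    · exact (f.tr0.precomp (fun q : T => q.1.2.2.1)).comp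
        ((CompComputes.projL _ _).comp
          ((CompComputes.projR _ _).comp (CompComputes.projR _ _)))
    · exact (CompComputes.projR _ _).comp
        ((CompComputes.projR _ _).comp (CompComputes.projR _ _))

/-- The unit `B ⟶ ‖B‖_A` of the propositional truncation. -/
def PropTruncUnit {B A : EffObj} (f : B ⟶ A) : B ⟶ PropTrunc f where
  f0 := fun b => b
  f1 := fun b b' π => ⟨(f.f1 b b' π).val, (f.f1 b b' π).2⟩
  tr0 := CompComputes.id _
  tr1 := f.tr1

/-- The propositional fibration `‖B‖_A ⟶ A` through which `f` factors. -/
def PropTruncProj {B A : EffObj} (f : B ⟶ A) : PropTrunc f ⟶ A where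
  f0 := f.f0
  f1 := fun _ _ π => ⟨π.val, π.2⟩
  tr0 := f.tr0
  tr1 := (CompComputes.projR _ _).comp (CompComputes.projR _ _)

end EffPaper
namespace EffPaper
open CategoryTheory

/-! ### Auxiliary infrastructure -/

theorem EffHom.ext' {B A : EffObj} {f g : EffHom B A} (h0 : f.f0 = g.f0)
    (h1 : ∀ b b' (ρ : B.Cell b b'), (f.f1 b b' ρ).val = (g.f1 b b' ρ).val) : f = g := by
  cases f with
  | mk f0 f1 t0 t1 =>
    cases g with
    | mk g0 g1 s0 s1 =>
      cases h0
      have : f1 = g1 := by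
        funext b b' ρ
        exact Subtype.ext (h1 b b' ρ)
      cases this
      rfl

theorem effHom_ext {B A : EffObj} {f g : B ⟶ A} (h0 : ∀ b, f.f0 b = g.f0 b)
    (h1 : ∀ b b' (ρ : B.Cell b b'), (f.f1 b b' ρ).val = (g.f1 b b' ρ).val) : f = g :=
  EffHom.ext' (funext h0) h1

theorem congr_f0 {B A : EffObj} {f g : B ⟶ A} (h : f = g) : ∀ b, f.f0 b = g.f0 b := by
  subst h; intro b; rfl

theorem congr_f1val {B A : EffObj} {f g : B ⟶ A} (h : f = g) :
    ∀ b b' (ρ : B.Cell b b'), (f.f1 b b' ρ).val = (g.f1 b b' ρ).val := by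
  subst h; intro b b' ρ; rfl

/-- Identity cells, as a function with a computability certificate. -/
theorem obj_id (X : EffObj) :
    ∃ e : ∀ a : X.A, X.Cell a a, CompComputes X.α (fun a => (e a).val) := by
  obtain ⟨o, hm, hc⟩ := X.idc.toComputes
  exact ⟨fun a => ⟨o a, hm a⟩, hc⟩

/-- Inverse cells, as a function with a computability certificate. -/
theorem obj_inv (X : EffObj) :
    ∃ iv : ∀ t : (a : X.A) × (a' : X.A) × X.Cell a a', X.Cell t.2.1 t.1,
      CompComputes (fun t : (a : X.A) × (a' : X.A) × X.Cell a a' =>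
        Nat.pair (X.α t.1) (Nat.pair (X.α t.2.1) t.2.2.val)) (fun t => (iv t).val) := by
  obtain ⟨o, hm, hc⟩ := X.invc.toComputes
  refine ⟨fun t => ⟨o ⟨(t.1, t.2.1, t.2.2.val), t.2.2.2⟩,
    hm ⟨(t.1, t.2.1, t.2.2.val), t.2.2.2⟩⟩, ?_⟩
  exact hc.precomp (fun t : (a : X.A) × (a' : X.A) × X.Cell a a' =>
    ⟨(t.1, t.2.1, t.2.2.val), t.2.2.2⟩)

/-- Composite cells, as a function with a computability certificate. -/
theorem obj_comp (X : EffObj) :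
    ∃ cp : ∀ t : (a : X.A) × (a' : X.A) × (a'' : X.A) × X.Cell a a' × X.Cell a' a'',
        X.Cell t.1 t.2.2.1,
      CompComputes (fun t : (a : X.A) × (a' : X.A) × (a'' : X.A) ×
          X.Cell a a' × X.Cell a' a'' =>
        Nat.pair (X.α t.1) (Nat.pair (X.α t.2.1) (Nat.pair (X.α t.2.2.1)
          (Nat.pair t.2.2.2.1.val t.2.2.2.2.val))))
        (fun t => (cp t).val) := by
  obtain ⟨o, hm, hc⟩ := X.compc.toComputes
  refine ⟨fun t => ⟨o ⟨(t.1, t.2.1, t.2.2.1, t.2.2.2.1.val, t.2.2.2.2.val),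
    t.2.2.2.1.2, t.2.2.2.2.2⟩,
    hm ⟨(t.1, t.2.1, t.2.2.1, t.2.2.2.1.val, t.2.2.2.2.val),
      t.2.2.2.1.2, t.2.2.2.2.2⟩⟩, ?_⟩
  exact hc.precomp (fun t : (a : X.A) × (a' : X.A) × (a'' : X.A) ×
      X.Cell a a' × X.Cell a' a'' =>
    ⟨(t.1, t.2.1, t.2.2.1, t.2.2.2.1.val, t.2.2.2.2.val), t.2.2.2.1.2, t.2.2.2.2.2⟩)

/-- The index type for lifting a cell along a fibration (condition (i)). -/
abbrev LiftIx {B A : EffObj} (f : B ⟶ A) : Type :=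
  (b : B.A) × (a : A.A) × {n // n ∈ A.hom (f.f0 b) a}

abbrev LiftIx.I {B A : EffObj} {f : B ⟶ A} (t : LiftIx f) : ℕ :=
  Nat.pair (B.α t.1) (Nat.pair (A.α t.2.1) t.2.2.val)

/-- The index type for adjusting a cell along a fibration (condition (ii)). -/
abbrev AdjIx {B A : EffObj} (f : B ⟶ A) : Type :=
  (b : B.A) × (b' : B.A) × B.Cell b b' × {n // n ∈ A.hom (f.f0 b) (f.f0 b')}

abbrev AdjIx.I {B A : EffObj} {f : B ⟶ A} (t : AdjIx f) : ℕ :=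
  Nat.pair (B.α t.1) (Nat.pair (B.α t.2.1) (Nat.pair t.2.2.1.val t.2.2.2.val))

/-- Extract condition (i) of being a fibration in functional form. -/
theorem fib_lift1 {B A : EffObj} {f : B ⟶ A} (hf : EffFib f) :
    ∃ (P0 : LiftIx f → B.A) (P1 : ∀ t : LiftIx f, B.Cell t.1 (P0 t)),
      (∀ t, f.f0 (P0 t) = t.2.1) ∧ (∀ t, (f.f1 t.1 (P0 t) (P1 t)).val = t.2.2.val) ∧
      CompComputes LiftIx.I (fun t => B.α (P0 t)) ∧
      CompComputes LiftIx.I (fun t => (P1 t).val) := by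
  obtain ⟨⟨φ, ψ, pφ, pψ, hl⟩, -⟩ := hf
  choose b' ρ h1 h2 h3 h4 using fun t : LiftIx f => hl t.1 t.2.1 t.2.2.val t.2.2.2
  exact ⟨b', ρ, h1, h2, ⟨φ, pφ, h3⟩, ⟨ψ, pψ, h4⟩⟩

/-- Extract condition (ii) of being a fibration in functional form. -/
theorem fib_lift2 {B A : EffObj} {f : B ⟶ A} (hf : EffFib f) :
    ∃ L : ∀ t : AdjIx f, B.Cell t.1 t.2.1,
      (∀ t, (f.f1 t.1 t.2.1 (L t)).val = t.2.2.2.val) ∧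
      CompComputes AdjIx.I (fun t => (L t).val) := by
  obtain ⟨-, χ, pχ, hl⟩ := hf
  choose ρ' h1 h2 using fun t : AdjIx f => hl t.1 t.2.1 t.2.2.1 t.2.2.2.val t.2.2.2.2
  exact ⟨ρ', h1, ⟨χ, pχ, h2⟩⟩

/-- Introduce a fibration from functional lifting data. -/
theorem effFib_intro {B A : EffObj} (f : B ⟶ A)
    (H1 : ∃ (P0 : LiftIx f → B.A) (P1 : ∀ t : LiftIx f, B.Cell t.1 (P0 t)),
      (∀ t, f.f0 (P0 t) = t.2.1) ∧ (∀ t, (f.f1 t.1 (P0 t) (P1 t)).val = t.2.2.val) ∧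
      CompComputes LiftIx.I (fun t => B.α (P0 t)) ∧
      CompComputes LiftIx.I (fun t => (P1 t).val))
    (H2 : ∃ L : ∀ t : AdjIx f, B.Cell t.1 t.2.1,
      (∀ t, (f.f1 t.1 t.2.1 (L t)).val = t.2.2.2.val) ∧
      CompComputes AdjIx.I (fun t => (L t).val)) : EffFib f := by
  obtain ⟨P0, P1, h1, h2, ⟨φ, pφ, h3⟩, ⟨ψ, pψ, h4⟩⟩ := H1
  obtain ⟨L, hL1, ⟨χ, pχ, hL2⟩⟩ := H2
  constructor
  · refine ⟨φ, ψ, pφ, pψ, fun b a π hπ => ?_⟩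
    exact ⟨P0 ⟨b, a, ⟨π, hπ⟩⟩, P1 ⟨b, a, ⟨π, hπ⟩⟩, h1 ⟨b, a, ⟨π, hπ⟩⟩,
      h2 ⟨b, a, ⟨π, hπ⟩⟩, h3 ⟨b, a, ⟨π, hπ⟩⟩, h4 ⟨b, a, ⟨π, hπ⟩⟩⟩
  · refine ⟨χ, pχ, fun b b' ρ π hπ => ?_⟩
    exact ⟨L ⟨b, b', ρ, ⟨π, hπ⟩⟩, hL1 ⟨b, b', ρ, ⟨π, hπ⟩⟩, hL2 ⟨b, b', ρ, ⟨π, hπ⟩⟩⟩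

/-- If two parallel maps agree on `f0`, they are homotopic (via identity cells). -/
theorem homotopic_of_f0_eq {B A : EffObj} {f g : B ⟶ A} (h : ∀ b, f.f0 b = g.f0 b) :
    EffHomotopic f g := by
  obtain ⟨e, hc⟩ := obj_id A
  refine CompComputes.toFinds ((hc.precomp f.f0).comp f.tr0) (fun b => ?_)
  exact (congrArg (A.hom (f.f0 b)) (h b)) ▸ (e (f.f0 b)).2

end EffPaper
namespace EffPaper
open CategoryTheory

/-- The hom-sets of the concrete pullback of `p` along itself: pairs of cells with
equal `p`-images. -/
def pairHom {X I : EffObj} (p : X ⟶ I) (x x' y y' : X.A) : Set ℕ :=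
  {n | ∃ (h1 : n.unpair.1 ∈ X.hom x y) (h2 : n.unpair.2 ∈ X.hom x' y'),
      (p.f1 x y ⟨n.unpair.1, h1⟩).val = (p.f1 x' y' ⟨n.unpair.2, h2⟩).val}

theorem pairHom_intro {X I : EffObj} (p : X ⟶ I) {x x' y y' : X.A}
    (u : X.Cell x y) (v : X.Cell x' y')
    (hval : (p.f1 x y u).val = (p.f1 x' y' v).val) :
    Nat.pair u.val v.val ∈ pairHom p x x' y y' := by
  have h1 : (Nat.pair u.val v.val).unpair.1 ∈ X.hom x y := by
    simp only [Nat.unpair_pair]; exact u.2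
  have h2 : (Nat.pair u.val v.val).unpair.2 ∈ X.hom x' y' := by
    simp only [Nat.unpair_pair]; exact v.2
  refine ⟨h1, h2, ?_⟩
  have e1 : (⟨(Nat.pair u.val v.val).unpair.1, h1⟩ : X.Cell x y) = u :=
    Subtype.ext (by simp)
  have e2 : (⟨(Nat.pair u.val v.val).unpair.2, h2⟩ : X.Cell x' y') = v :=
    Subtype.ext (by simp)
  rw [e1, e2, hval]

theorem pairHom_fst {X I : EffObj} {p : X ⟶ I} {x x' y y' : X.A} {n : ℕ}
    (h : n ∈ pairHom p x x' y y') : n.unpair.1 ∈ X.hom x y := h.choose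

theorem pairHom_snd {X I : EffObj} {p : X ⟶ I} {x x' y y' : X.A} {n : ℕ}
    (h : n ∈ pairHom p x x' y y') : n.unpair.2 ∈ X.hom x' y' := h.choose_spec.choose

theorem pairHom_eq {X I : EffObj} {p : X ⟶ I} {x x' y y' : X.A} {n : ℕ}
    (h : n ∈ pairHom p x x' y y') (h1 : n.unpair.1 ∈ X.hom x y)
    (h2 : n.unpair.2 ∈ X.hom x' y') :
    (p.f1 x y ⟨n.unpair.1, h1⟩).val = (p.f1 x' y' ⟨n.unpair.2, h2⟩).val := by
  obtain ⟨a, b, e⟩ := h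
  exact e

/-- Given a pair of parallel-ish cells `u, v`, adjust `v` (using that `p` is a
fibration) so that its `p`-image agrees with that of `u`, producing elements of
`pairHom` computably. -/
theorem pair_adjust {X I : EffObj} {p : X ⟶ I} (hp : EffFib p) {T : Sort*}
    {x x' y y' : T → X.A}
    (hx : ∀ t, p.f0 (x t) = p.f0 (x' t)) (hy : ∀ t, p.f0 (y t) = p.f0 (y' t))
    (u : ∀ t, X.Cell (x t) (y t)) (v : ∀ t, X.Cell (x' t) (y' t))
    {I0 : T → ℕ}
    (hαx : CompComputes I0 (fun t => X.α (x t)))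
    (hαx' : CompComputes I0 (fun t => X.α (x' t)))
    (hαy : CompComputes I0 (fun t => X.α (y t)))
    (hαy' : CompComputes I0 (fun t => X.α (y' t)))
    (hu : CompComputes I0 (fun t => (u t).val))
    (hv : CompComputes I0 (fun t => (v t).val)) :
    CompFinds I0 (fun t => pairHom p (x t) (x' t) (y t) (y' t)) := by
  obtain ⟨L, hL1, hL2⟩ := fib_lift2 hp
  have mem : ∀ t, (p.f1 (x t) (y t) (u t)).val ∈ I.hom (p.f0 (x' t)) (p.f0 (y' t)) := by
    intro t
    rw [← hx t, ← hy t]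
    exact (p.f1 (x t) (y t) (u t)).2
  set w : ∀ t, X.Cell (x' t) (y' t) :=
    fun t => L ⟨x' t, y' t, v t, ⟨(p.f1 (x t) (y t) (u t)).val, mem t⟩⟩ with hw
  have hπ : CompComputes I0 (fun t => (p.f1 (x t) (y t) (u t)).val) :=
    (p.tr1.precomp (fun t => ⟨x t, y t, u t⟩)).comp (hαx.pair (hαy.pair hu))
  have hwc : CompComputes I0 (fun t => (w t).val) :=
    (hL2.precomp (fun t =>
        ⟨x' t, y' t, v t, ⟨(p.f1 (x t) (y t) (u t)).val, mem t⟩⟩)).comp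
      (hαx'.pair (hαy'.pair (hv.pair hπ)))
  refine (hu.pair hwc).toFinds (fun t => ?_)
  refine pairHom_intro p (u t) (w t) ?_
  rw [hw]
  exact (hL1 ⟨x' t, y' t, v t, ⟨(p.f1 (x t) (y t) (u t)).val, mem t⟩⟩).symm


/-- Extract a component of a `Nat.pair`-encoded input by a primitive recursive function. -/
theorem CompComputes.ofPrim {X : Sort*} {I O : X → ℕ} (f : ℕ → ℕ) (hf : Primrec f)
    (h : ∀ x, f (I x) = O x) : CompComputes I O :=
  ⟨fun n => Part.some (f n), (Primrec.to_comp hf).partrec,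
    fun x => h x ▸ Part.mem_some _⟩

theorem pL : Primrec fun n : ℕ => n.unpair.1 := Primrec.fst.comp Primrec.unpair
theorem pR : Primrec fun n : ℕ => n.unpair.2 := Primrec.snd.comp Primrec.unpair

/-- Underlying type of the concrete pullback of `p` along itself. -/
abbrev VA {X I : EffObj} (p : X ⟶ I) : Type := {q : X.A × X.A // p.f0 q.1 = p.f0 q.2}

abbrev VinvIx {X I : EffObj} (p : X ⟶ I) : Type :=
  {t : VA p × VA p × ℕ // t.2.2 ∈ pairHom p t.1.1.1 t.1.1.2 t.2.1.1.1 t.2.1.1.2}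

abbrev VcompIx {X I : EffObj} (p : X ⟶ I) : Type :=
  {t : VA p × VA p × VA p × ℕ × ℕ //
    t.2.2.2.1 ∈ pairHom p t.1.1.1 t.1.1.2 t.2.1.1.1 t.2.1.1.2 ∧
    t.2.2.2.2 ∈ pairHom p t.2.1.1.1 t.2.1.1.2 t.2.2.1.1.1 t.2.2.1.1.2}

/-- The concrete pullback of a fibration `p : X ⟶ I` along itself. -/
def Vobj {X I : EffObj} (p : X ⟶ I) (hp : EffFib p) : EffObj where
  A := VA p
  α q := Nat.pair (X.α q.1.1) (X.α q.1.2)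
  hom q q' := pairHom p q.1.1 q.1.2 q'.1.1 q'.1.2
  idc := by
    obtain ⟨e, he⟩ := obj_id X
    exact pair_adjust hp (x := fun q : VA p => q.1.1) (x' := fun q : VA p => q.1.2)
      (y := fun q : VA p => q.1.1) (y' := fun q : VA p => q.1.2)
      (fun q => q.2) (fun q => q.2) (fun q => e q.1.1) (fun q => e q.1.2)
      (CompComputes.ofPrim _ pL (fun q => by simp))
      (CompComputes.ofPrim _ pR (fun q => by simp))
      (CompComputes.ofPrim _ pL (fun q => by simp))
      (CompComputes.ofPrim _ pR (fun q => by simp))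
      ((he.precomp (fun q : VA p => q.1.1)).comp
        (CompComputes.ofPrim _ pL (fun q => by simp)))
      ((he.precomp (fun q : VA p => q.1.2)).comp
        (CompComputes.ofPrim _ pR (fun q => by simp)))
  invc := by
    obtain ⟨iv, hiv⟩ := obj_inv X
    have hαa : CompComputes (fun t : VinvIx p =>
        Nat.pair (Nat.pair (X.α t.1.1.1.1) (X.α t.1.1.1.2))
          (Nat.pair (Nat.pair (X.α t.1.2.1.1.1) (X.α t.1.2.1.1.2)) t.1.2.2))
        (fun t => X.α t.1.1.1.1) :=
      CompComputes.ofPrim _ (pL.comp pL) (fun t => by simp)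
    have hαa' : CompComputes (fun t : VinvIx p =>
        Nat.pair (Nat.pair (X.α t.1.1.1.1) (X.α t.1.1.1.2))
          (Nat.pair (Nat.pair (X.α t.1.2.1.1.1) (X.α t.1.2.1.1.2)) t.1.2.2))
        (fun t => X.α t.1.1.1.2) :=
      CompComputes.ofPrim _ (pR.comp pL) (fun t => by simp)
    have hαb : CompComputes (fun t : VinvIx p =>
        Nat.pair (Nat.pair (X.α t.1.1.1.1) (X.α t.1.1.1.2))
          (Nat.pair (Nat.pair (X.α t.1.2.1.1.1) (X.α t.1.2.1.1.2)) t.1.2.2))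
        (fun t => X.α t.1.2.1.1.1) :=
      CompComputes.ofPrim _ (pL.comp (pL.comp pR)) (fun t => by simp)
    have hαb' : CompComputes (fun t : VinvIx p =>
        Nat.pair (Nat.pair (X.α t.1.1.1.1) (X.α t.1.1.1.2))
          (Nat.pair (Nat.pair (X.α t.1.2.1.1.1) (X.α t.1.2.1.1.2)) t.1.2.2))
        (fun t => X.α t.1.2.1.1.2) :=
      CompComputes.ofPrim _ (pR.comp (pL.comp pR)) (fun t => by simp)
    have hn1 : CompComputes (fun t : VinvIx p =>
        Nat.pair (Nat.pair (X.α t.1.1.1.1) (X.α t.1.1.1.2))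
          (Nat.pair (Nat.pair (X.α t.1.2.1.1.1) (X.α t.1.2.1.1.2)) t.1.2.2))
        (fun t => (t.1.2.2 : ℕ).unpair.1) :=
      CompComputes.ofPrim _ (pL.comp (pR.comp pR)) (fun t => by simp)
    have hn2 : CompComputes (fun t : VinvIx p =>
        Nat.pair (Nat.pair (X.α t.1.1.1.1) (X.α t.1.1.1.2))
          (Nat.pair (Nat.pair (X.α t.1.2.1.1.1) (X.α t.1.2.1.1.2)) t.1.2.2))
        (fun t => (t.1.2.2 : ℕ).unpair.2) :=
      CompComputes.ofPrim _ (pR.comp (pR.comp pR)) (fun t => by simp)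
    exact pair_adjust hp
      (x := fun t : VinvIx p => t.1.2.1.1.1) (x' := fun t : VinvIx p => t.1.2.1.1.2)
      (y := fun t : VinvIx p => t.1.1.1.1) (y' := fun t : VinvIx p => t.1.1.1.2)
      (fun t => t.1.2.1.2) (fun t => t.1.1.2)
      (fun t => iv ⟨t.1.1.1.1, t.1.2.1.1.1, ⟨t.1.2.2.unpair.1, pairHom_fst t.2⟩⟩)
      (fun t => iv ⟨t.1.1.1.2, t.1.2.1.1.2, ⟨t.1.2.2.unpair.2, pairHom_snd t.2⟩⟩)
      hαb hαb' hαa hαa'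
      ((hiv.precomp (fun t : VinvIx p =>
        ⟨t.1.1.1.1, t.1.2.1.1.1, ⟨t.1.2.2.unpair.1, pairHom_fst t.2⟩⟩)).comp
        (hαa.pair (hαb.pair hn1)))
      ((hiv.precomp (fun t : VinvIx p =>
        ⟨t.1.1.1.2, t.1.2.1.1.2, ⟨t.1.2.2.unpair.2, pairHom_snd t.2⟩⟩)).comp
        (hαa'.pair (hαb'.pair hn2)))
  compc := by
    obtain ⟨cp, hcp⟩ := obj_comp X
    have key : ∀ g : ℕ → ℕ, Primrec g → ∀ O : VcompIx p → ℕ,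
        (∀ t : VcompIx p, g (Nat.pair (Nat.pair (X.α t.1.1.1.1) (X.α t.1.1.1.2))
          (Nat.pair (Nat.pair (X.α t.1.2.1.1.1) (X.α t.1.2.1.1.2))
            (Nat.pair (Nat.pair (X.α t.1.2.2.1.1.1) (X.α t.1.2.2.1.1.2))
              (Nat.pair t.1.2.2.2.1 t.1.2.2.2.2)))) = O t) →
        CompComputes (fun t : VcompIx p =>
          Nat.pair (Nat.pair (X.α t.1.1.1.1) (X.α t.1.1.1.2))
            (Nat.pair (Nat.pair (X.α t.1.2.1.1.1) (X.α t.1.2.1.1.2))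
              (Nat.pair (Nat.pair (X.α t.1.2.2.1.1.1) (X.α t.1.2.2.1.1.2))
                (Nat.pair t.1.2.2.2.1 t.1.2.2.2.2)))) O :=
      fun g hg O h => CompComputes.ofPrim g hg h
    have hαa := key _ (pL.comp pL) (fun t => X.α t.1.1.1.1) (fun t => by simp)
    have hαa' := key _ (pR.comp pL) (fun t => X.α t.1.1.1.2) (fun t => by simp)
    have hαb := key _ (pL.comp (pL.comp pR)) (fun t => X.α t.1.2.1.1.1) (fun t => by simp)
    have hαb' := key _ (pR.comp (pL.comp pR)) (fun t => X.α t.1.2.1.1.2) (fun t => by simp)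
    have hαc := key _ (pL.comp (pL.comp (pR.comp pR)))
      (fun t => X.α t.1.2.2.1.1.1) (fun t => by simp)
    have hαc' := key _ (pR.comp (pL.comp (pR.comp pR)))
      (fun t => X.α t.1.2.2.1.1.2) (fun t => by simp)
    have hm1 := key _ (pL.comp (pL.comp (pR.comp (pR.comp pR))))
      (fun t => (t.1.2.2.2.1 : ℕ).unpair.1) (fun t => by simp)
    have hm2 := key _ (pR.comp (pL.comp (pR.comp (pR.comp pR))))
      (fun t => (t.1.2.2.2.1 : ℕ).unpair.2) (fun t => by simp)
    have hn1 := key _ (pL.comp (pR.comp (pR.comp (pR.comp pR))))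
      (fun t => (t.1.2.2.2.2 : ℕ).unpair.1) (fun t => by simp)
    have hn2 := key _ (pR.comp (pR.comp (pR.comp (pR.comp pR))))
      (fun t => (t.1.2.2.2.2 : ℕ).unpair.2) (fun t => by simp)
    exact pair_adjust hp
      (x := fun t : VcompIx p => t.1.1.1.1) (x' := fun t : VcompIx p => t.1.1.1.2)
      (y := fun t : VcompIx p => t.1.2.2.1.1.1) (y' := fun t : VcompIx p => t.1.2.2.1.1.2)
      (fun t => t.1.1.2) (fun t => t.1.2.2.1.2)
      (fun t => cp ⟨t.1.1.1.1, t.1.2.1.1.1, t.1.2.2.1.1.1,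
        ⟨t.1.2.2.2.1.unpair.1, pairHom_fst t.2.1⟩,
        ⟨t.1.2.2.2.2.unpair.1, pairHom_fst t.2.2⟩⟩)
      (fun t => cp ⟨t.1.1.1.2, t.1.2.1.1.2, t.1.2.2.1.1.2,
        ⟨t.1.2.2.2.1.unpair.2, pairHom_snd t.2.1⟩,
        ⟨t.1.2.2.2.2.unpair.2, pairHom_snd t.2.2⟩⟩)
      hαa hαa' hαc hαc'
      ((hcp.precomp (fun t : VcompIx p =>
        ⟨t.1.1.1.1, t.1.2.1.1.1, t.1.2.2.1.1.1,
          ⟨t.1.2.2.2.1.unpair.1, pairHom_fst t.2.1⟩,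
          ⟨t.1.2.2.2.2.unpair.1, pairHom_fst t.2.2⟩⟩)).comp
        (hαa.pair (hαb.pair (hαc.pair (hm1.pair hn1)))))
      ((hcp.precomp (fun t : VcompIx p =>
        ⟨t.1.1.1.2, t.1.2.1.1.2, t.1.2.2.1.1.2,
          ⟨t.1.2.2.2.1.unpair.2, pairHom_snd t.2.1⟩,
          ⟨t.1.2.2.2.2.unpair.2, pairHom_snd t.2.2⟩⟩)).comp
        (hαa'.pair (hαb'.pair (hαc'.pair (hm2.pair hn2)))))

end EffPaper
namespace EffPaper
open CategoryTheory

/-- First projection of the concrete pullback. -/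
def Vp1 {X I : EffObj} (p : X ⟶ I) (hp : EffFib p) : Vobj p hp ⟶ X where
  f0 q := q.1.1
  f1 q q' n := ⟨n.val.unpair.1, pairHom_fst n.2⟩
  tr0 := CompComputes.ofPrim _ pL (fun q => by simp [Vobj])
  tr1 := CompComputes.ofPrim _ (pL.comp (pR.comp pR)) (fun t => by simp [Vobj])

/-- Second projection of the concrete pullback. -/
def Vp2 {X I : EffObj} (p : X ⟶ I) (hp : EffFib p) : Vobj p hp ⟶ X where
  f0 q := q.1.2
  f1 q q' n := ⟨n.val.unpair.2, pairHom_snd n.2⟩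
  tr0 := CompComputes.ofPrim _ pR (fun q => by simp [Vobj])
  tr1 := CompComputes.ofPrim _ (pR.comp (pR.comp pR)) (fun t => by simp [Vobj])

theorem Vcone {X I : EffObj} (p : X ⟶ I) (hp : EffFib p) :
    Vp1 p hp ≫ p = Vp2 p hp ≫ p := by
  refine effHom_ext (fun q => q.2) (fun q q' n => ?_)
  exact pairHom_eq n.2 (pairHom_fst n.2) (pairHom_snd n.2)

theorem Vobj_isPB {X I : EffObj} (p : X ⟶ I) (hp : EffFib p) :
    IsPB (Vp1 p hp) (Vp2 p hp) p p := by
  refine ⟨Vcone p hp, fun Q q₁ q₂ hq => ?_⟩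
  refine ⟨{ f0 := fun x => ⟨(q₁.f0 x, q₂.f0 x), congr_f0 hq x⟩
            f1 := fun x x' ρ => ⟨Nat.pair (q₁.f1 x x' ρ).val (q₂.f1 x x' ρ).val,
              pairHom_intro p (q₁.f1 x x' ρ) (q₂.f1 x x' ρ) (congr_f1val hq x x' ρ)⟩
            tr0 := q₁.tr0.pair q₂.tr0
            tr1 := q₁.tr1.pair q₂.tr1 }, ⟨?_, ?_⟩, ?_⟩
  · refine effHom_ext (fun x => rfl) (fun x x' ρ => ?_)
    show (Nat.pair (q₁.f1 x x' ρ).val (q₂.f1 x x' ρ).val).unpair.1 = (q₁.f1 x x' ρ).val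
    simp
  · refine effHom_ext (fun x => rfl) (fun x x' ρ => ?_)
    show (Nat.pair (q₁.f1 x x' ρ).val (q₂.f1 x x' ρ).val).unpair.2 = (q₂.f1 x x' ρ).val
    simp
  · rintro u ⟨hu1, hu2⟩
    refine effHom_ext (fun x => Subtype.ext (Prod.ext ?_ ?_)) (fun x x' ρ => ?_)
    · exact congr_f0 hu1 x
    · exact congr_f0 hu2 x
    · have e1 : ((u.f1 x x' ρ).val).unpair.1 = (q₁.f1 x x' ρ).val :=
        congr_f1val hu1 x x' ρ
      have e2 : ((u.f1 x x' ρ).val).unpair.2 = (q₂.f1 x x' ρ).val :=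
        congr_f1val hu2 x x' ρ
      show (u.f1 x x' ρ).val = Nat.pair (q₁.f1 x x' ρ).val (q₂.f1 x x' ρ).val
      rw [← e1, ← e2, Nat.pair_unpair]

/-- Underlying type of the concrete fibrewise path object of `p`. -/
abbrev PA {X I : EffObj} (p : X ⟶ I) : Type :=
  {q : X.A × X.A × ℕ // q.2.2 ∈ X.hom q.1 q.2.1 ∧ p.f0 q.1 = p.f0 q.2.1}

abbrev toVA {X I : EffObj} (p : X ⟶ I) (q : PA p) : VA p := ⟨(q.1.1, q.1.2.1), q.2.2⟩

/-- The total space of the concrete fibrewise path object of `p`. -/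
def Pobj {X I : EffObj} (p : X ⟶ I) (hp : EffFib p) : EffObj where
  A := PA p
  α q := Nat.pair (X.α q.1.1) (Nat.pair (X.α q.1.2.1) q.1.2.2)
  hom q q' := pairHom p q.1.1 q.1.2.1 q'.1.1 q'.1.2.1
  idc := by
    refine (Vobj p hp).idc.via (fun q : PA p => toVA p q) ?_
    exact (CompComputes.ofPrim _ pL (fun q => by simp [Vobj])).pair
      (CompComputes.ofPrim _ (pL.comp pR) (fun q => by simp [Vobj]))
  invc := by
    refine (Vobj p hp).invc.via
      (fun x : {t : PA p × PA p × ℕ //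
          t.2.2 ∈ pairHom p t.1.1.1 t.1.1.2.1 t.2.1.1.1 t.2.1.1.2.1} =>
        ⟨(toVA p x.1.1, toVA p x.1.2.1, x.1.2.2), x.2⟩) ?_
    refine ((CompComputes.ofPrim _ (pL.comp pL) (fun q => by simp [Vobj])).pair
      (CompComputes.ofPrim _ (pL.comp (pR.comp pL)) (fun q => by simp [Vobj]))).pair
      (((CompComputes.ofPrim _ (pL.comp (pL.comp pR)) (fun q => by simp [Vobj])).pair
        (CompComputes.ofPrim _ (pL.comp (pR.comp (pL.comp pR))) (fun q => by simp [Vobj]))).pair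
        (CompComputes.ofPrim _ (pR.comp pR) (fun q => by simp [Vobj])))
  compc := by
    refine (Vobj p hp).compc.via
      (fun x : {t : PA p × PA p × PA p × ℕ × ℕ //
          t.2.2.2.1 ∈ pairHom p t.1.1.1 t.1.1.2.1 t.2.1.1.1 t.2.1.1.2.1 ∧
          t.2.2.2.2 ∈ pairHom p t.2.1.1.1 t.2.1.1.2.1 t.2.2.1.1.1 t.2.2.1.1.2.1} =>
        ⟨(toVA p x.1.1, toVA p x.1.2.1, toVA p x.1.2.2.1,
          x.1.2.2.2.1, x.1.2.2.2.2), x.2⟩) ?_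
    refine ((CompComputes.ofPrim _ (pL.comp pL) (fun q => by simp [Vobj])).pair
      (CompComputes.ofPrim _ (pL.comp (pR.comp pL)) (fun q => by simp [Vobj]))).pair
      ((((CompComputes.ofPrim _ (pL.comp (pL.comp pR)) (fun q => by simp [Vobj])).pair
        (CompComputes.ofPrim _ (pL.comp (pR.comp (pL.comp pR))) (fun q => by simp [Vobj])))).pair
        ((((CompComputes.ofPrim _ (pL.comp (pL.comp (pR.comp pR))) (fun q => by simp [Vobj])).pair
          (CompComputes.ofPrim _ (pL.comp (pR.comp (pL.comp (pR.comp pR)))) (fun q => by simp [Vobj])))).pair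
          ((CompComputes.ofPrim _ (pL.comp (pR.comp (pR.comp pR))) (fun q => by simp [Vobj])).pair
            (CompComputes.ofPrim _ (pR.comp (pR.comp (pR.comp pR))) (fun q => by simp [Vobj])))))

end EffPaper
namespace EffPaper
open CategoryTheory

noncomputable def idC (X : EffObj) : ∀ a, X.Cell a a := (obj_id X).choose
theorem idC_comp (X : EffObj) : CompComputes X.α (fun a => (idC X a).val) :=
  (obj_id X).choose_spec

/-- Source map of the concrete fibrewise path object. -/
def Ps {X I : EffObj} (p : X ⟶ I) (hp : EffFib p) : Pobj p hp ⟶ X where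
  f0 q := q.1.1
  f1 q q' n := ⟨n.val.unpair.1, pairHom_fst n.2⟩
  tr0 := CompComputes.ofPrim _ pL (fun q => by simp [Pobj])
  tr1 := CompComputes.ofPrim _ (pL.comp (pR.comp pR)) (fun t => by simp [Pobj])

/-- Target map of the concrete fibrewise path object. -/
def Pt {X I : EffObj} (p : X ⟶ I) (hp : EffFib p) : Pobj p hp ⟶ X where
  f0 q := q.1.2.1
  f1 q q' n := ⟨n.val.unpair.2, pairHom_snd n.2⟩
  tr0 := CompComputes.ofPrim _ (pL.comp pR) (fun q => by simp [Pobj])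
  tr1 := CompComputes.ofPrim _ (pR.comp (pR.comp pR)) (fun t => by simp [Pobj])

/-- Reflexivity map of the concrete fibrewise path object. -/
noncomputable def Pr {X I : EffObj} (p : X ⟶ I) (hp : EffFib p) : X ⟶ Pobj p hp where
  f0 x := ⟨(x, x, (idC X x).val), (idC X x).2, rfl⟩
  f1 x y ρ := ⟨Nat.pair ρ.val ρ.val, pairHom_intro p ρ ρ rfl⟩
  tr0 := (CompComputes.id _).pair ((CompComputes.id _).pair (idC_comp X))
  tr1 := (CompComputes.ofPrim _ (pR.comp pR) (fun t => by simp)).pair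
    (CompComputes.ofPrim _ (pR.comp pR) (fun t => by simp))

theorem Pr_Ps {X I : EffObj} (p : X ⟶ I) (hp : EffFib p) :
    Pr p hp ≫ Ps p hp = 𝟙 X := by
  refine effHom_ext (fun x => rfl) (fun x y ρ => ?_)
  show (Nat.pair ρ.val ρ.val).unpair.1 = ρ.val
  simp

theorem Pr_Pt {X I : EffObj} (p : X ⟶ I) (hp : EffFib p) :
    Pr p hp ≫ Pt p hp = 𝟙 X := by
  refine effHom_ext (fun x => rfl) (fun x y ρ => ?_)
  show (Nat.pair ρ.val ρ.val).unpair.2 = ρ.val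
  simp

theorem Ps_p {X I : EffObj} (p : X ⟶ I) (hp : EffFib p) :
    Ps p hp ≫ p = Pt p hp ≫ p := by
  refine effHom_ext (fun q => q.2.2) (fun q q' n => ?_)
  exact pairHom_eq n.2 (pairHom_fst n.2) (pairHom_snd n.2)

theorem Ps_Pr_htp {X I : EffObj} (p : X ⟶ I) (hp : EffFib p) :
    EffHomotopic (Ps p hp ≫ Pr p hp) (𝟙 (Pobj p hp)) := by
  obtain ⟨L, hL1, hL2⟩ := fib_lift2 hp
  have mem : ∀ q : PA p, (p.f1 q.1.1 q.1.2.1 ⟨q.1.2.2, q.2.1⟩).val ∈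
      I.hom (p.f0 q.1.1) (p.f0 q.1.1) := by
    intro q
    have h := (p.f1 q.1.1 q.1.2.1 ⟨q.1.2.2, q.2.1⟩).2
    exact (congrArg (I.hom (p.f0 q.1.1)) q.2.2).symm ▸ h
  set w : ∀ q : PA p, X.Cell q.1.1 q.1.1 := fun q =>
    L ⟨q.1.1, q.1.1, idC X q.1.1, ⟨(p.f1 q.1.1 q.1.2.1 ⟨q.1.2.2, q.2.1⟩).val, mem q⟩⟩
    with hwdef
  have hα1 : CompComputes (fun q : PA p => (Pobj p hp).α q) (fun q => X.α q.1.1) :=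
    CompComputes.ofPrim _ pL (fun q => by simp [Pobj])
  have hα2 : CompComputes (fun q : PA p => (Pobj p hp).α q) (fun q => X.α q.1.2.1) :=
    CompComputes.ofPrim _ (pL.comp pR) (fun q => by simp [Pobj])
  have hσ : CompComputes (fun q : PA p => (Pobj p hp).α q) (fun q => q.1.2.2) :=
    CompComputes.ofPrim _ (pR.comp pR) (fun q => by simp [Pobj])
  have hπ : CompComputes (fun q : PA p => (Pobj p hp).α q)
      (fun q => (p.f1 q.1.1 q.1.2.1 ⟨q.1.2.2, q.2.1⟩).val) :=
    (p.tr1.precomp (fun q : PA p => ⟨q.1.1, q.1.2.1, ⟨q.1.2.2, q.2.1⟩⟩)).comp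
      (hα1.pair (hα2.pair hσ))
  have hid : CompComputes (fun q : PA p => (Pobj p hp).α q)
      (fun q => (idC X q.1.1).val) :=
    ((idC_comp X).precomp (fun q : PA p => q.1.1)).comp hα1
  have hw : CompComputes (fun q : PA p => (Pobj p hp).α q) (fun q => (w q).val) :=
    (hL2.precomp (fun q : PA p =>
      ⟨q.1.1, q.1.1, idC X q.1.1,
        ⟨(p.f1 q.1.1 q.1.2.1 ⟨q.1.2.2, q.2.1⟩).val, mem q⟩⟩)).comp
      (hα1.pair (hα1.pair (hid.pair hπ)))
  refine (hw.pair hσ).toFinds (fun q => ?_)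
  refine pairHom_intro p (w q) ⟨q.1.2.2, q.2.1⟩ ?_
  rw [hwdef]
  exact hL1 ⟨q.1.1, q.1.1, idC X q.1.1,
    ⟨(p.f1 q.1.1 q.1.2.1 ⟨q.1.2.2, q.2.1⟩).val, mem q⟩⟩

theorem Pr_eqv {X I : EffObj} (p : X ⟶ I) (hp : EffFib p) : EffEqv (Pr p hp) :=
  ⟨Ps p hp, homotopic_of_f0_eq (fun x => rfl), Ps_Pr_htp p hp⟩

/-- The fibration from the path object to the pullback. -/
def Ph {X I : EffObj} (p : X ⟶ I) (hp : EffFib p) : Pobj p hp ⟶ Vobj p hp where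
  f0 q := toVA p q
  f1 q q' n := ⟨n.val, n.2⟩
  tr0 := (CompComputes.ofPrim _ pL (fun q => by simp [Pobj, Vobj])).pair
    (CompComputes.ofPrim _ (pL.comp pR) (fun q => by simp [Pobj, Vobj]))
  tr1 := CompComputes.ofPrim _ (pR.comp pR) (fun t => by simp [Pobj, Vobj])

theorem Ph_Vp1 {X I : EffObj} (p : X ⟶ I) (hp : EffFib p) :
    Ph p hp ≫ Vp1 p hp = Ps p hp :=
  effHom_ext (fun q => rfl) (fun q q' n => rfl)

theorem Ph_Vp2 {X I : EffObj} (p : X ⟶ I) (hp : EffFib p) :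
    Ph p hp ≫ Vp2 p hp = Pt p hp :=
  effHom_ext (fun q => rfl) (fun q q' n => rfl)

theorem Ph_fib {X I : EffObj} (p : X ⟶ I) (hp : EffFib p) : EffFib (Ph p hp) := by
  obtain ⟨iv, hiv⟩ := obj_inv X
  obtain ⟨cp, hcp⟩ := obj_comp X
  refine effFib_intro _ ?_ ?_
  · -- condition (i)
    set T := LiftIx (Ph p hp)
    have hαq1 : CompComputes (LiftIx.I (f := Ph p hp)) (fun t : T => X.α t.1.1.1) :=
      CompComputes.ofPrim _ (pL.comp pL) (fun t => by simp [Pobj, Vobj])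
    have hαq2 : CompComputes (LiftIx.I (f := Ph p hp)) (fun t : T => X.α t.1.1.2.1) :=
      CompComputes.ofPrim _ (pL.comp (pR.comp pL)) (fun t => by simp [Pobj, Vobj])
    have hσ : CompComputes (LiftIx.I (f := Ph p hp)) (fun t : T => t.1.1.2.2) :=
      CompComputes.ofPrim _ (pR.comp (pR.comp pL)) (fun t => by simp [Pobj, Vobj])
    have hαa1 : CompComputes (LiftIx.I (f := Ph p hp)) (fun t : T => X.α t.2.1.1.1) :=
      CompComputes.ofPrim _ (pL.comp (pL.comp pR)) (fun t => by simp [Pobj, Vobj])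
    have hαa2 : CompComputes (LiftIx.I (f := Ph p hp)) (fun t : T => X.α t.2.1.1.2) :=
      CompComputes.ofPrim _ (pR.comp (pL.comp pR)) (fun t => by simp [Pobj, Vobj])
    have hn1 : CompComputes (LiftIx.I (f := Ph p hp))
        (fun t : T => (t.2.2.val : ℕ).unpair.1) :=
      CompComputes.ofPrim _ (pL.comp (pR.comp pR)) (fun t => by simp [Pobj, Vobj])
    have hn2 : CompComputes (LiftIx.I (f := Ph p hp))
        (fun t : T => (t.2.2.val : ℕ).unpair.2) :=
      CompComputes.ofPrim _ (pR.comp (pR.comp pR)) (fun t => by simp [Pobj, Vobj])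
    set ρc : ∀ t : T, X.Cell t.1.1.1 t.2.1.1.1 :=
      fun t => ⟨t.2.2.val.unpair.1, pairHom_fst t.2.2.2⟩ with hρc
    set τc : ∀ t : T, X.Cell t.1.1.2.1 t.2.1.1.2 :=
      fun t => ⟨t.2.2.val.unpair.2, pairHom_snd t.2.2.2⟩ with hτc
    set σc : ∀ t : T, X.Cell t.1.1.1 t.1.1.2.1 :=
      fun t => ⟨t.1.1.2.2, t.1.2.1⟩ with hσc
    set ρi : ∀ t : T, X.Cell t.2.1.1.1 t.1.1.1 :=
      fun t => iv ⟨t.1.1.1, t.2.1.1.1, ρc t⟩ with hρi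
    set c1 : ∀ t : T, X.Cell t.2.1.1.1 t.1.1.2.1 :=
      fun t => cp ⟨t.2.1.1.1, t.1.1.1, t.1.1.2.1, ρi t, σc t⟩ with hc1
    set σ' : ∀ t : T, X.Cell t.2.1.1.1 t.2.1.1.2 :=
      fun t => cp ⟨t.2.1.1.1, t.1.1.2.1, t.2.1.1.2, c1 t, τc t⟩ with hσ'
    have hρic : CompComputes (LiftIx.I (f := Ph p hp)) (fun t : T => (ρi t).val) :=
      (hiv.precomp (fun t : T => ⟨t.1.1.1, t.2.1.1.1, ρc t⟩)).comp
        (hαq1.pair (hαa1.pair hn1))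
    have hc1c : CompComputes (LiftIx.I (f := Ph p hp)) (fun t : T => (c1 t).val) :=
      (hcp.precomp (fun t : T => ⟨t.2.1.1.1, t.1.1.1, t.1.1.2.1, ρi t, σc t⟩)).comp
        (hαa1.pair (hαq1.pair (hαq2.pair (hρic.pair hσ))))
    have hσ'c : CompComputes (LiftIx.I (f := Ph p hp)) (fun t : T => (σ' t).val) :=
      (hcp.precomp (fun t : T => ⟨t.2.1.1.1, t.1.1.2.1, t.2.1.1.2, c1 t, τc t⟩)).comp
        (hαa1.pair (hαq2.pair (hαa2.pair (hc1c.pair hn2))))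
    refine ⟨fun t : T => ⟨(t.2.1.1.1, t.2.1.1.2, (σ' t).val), (σ' t).2, t.2.1.2⟩,
      fun t => ⟨t.2.2.val, t.2.2.2⟩, fun t => Subtype.ext rfl, fun t => rfl, ?_, ?_⟩
    · exact hαa1.pair (hαa2.pair hσ'c)
    · exact CompComputes.ofPrim _ (pR.comp pR) (fun t => by simp [Pobj, Vobj])
  · -- condition (ii)
    refine ⟨fun t => ⟨t.2.2.2.val, t.2.2.2.2⟩, fun t => rfl, ?_⟩
    exact CompComputes.ofPrim _ (pR.comp (pR.comp pR)) (fun t => by simp [Pobj, Vobj])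

/-- The concrete fibrewise path object is a relative path object. -/
theorem relPathObj {X I : EffObj} (p : X ⟶ I) (hp : EffFib p) :
    IsRelPathObj EffPS p (Pr p hp) (Ps p hp) (Pt p hp) :=
  ⟨Pr_eqv p hp, Pr_Ps p hp, Pr_Pt p hp, Ps_p p hp,
    Vobj p hp, Vp1 p hp, Vp2 p hp, Ph p hp, Vobj_isPB p hp,
    Ph_Vp1 p hp, Ph_Vp2 p hp, Ph_fib p hp⟩

/-- Build a fibrewise homotopy from concrete data. -/
theorem mk_fibHom {Z X I : EffObj} (p : X ⟶ I) (hp : EffFib p) (u v : Z ⟶ X)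
    (heq : ∀ z, p.f0 (u.f0 z) = p.f0 (v.f0 z))
    (η : ∀ z, X.Cell (u.f0 z) (v.f0 z))
    (hηc : CompComputes Z.α (fun z => (η z).val))
    (hcell : ∀ z z' (ρ : Z.Cell z z'),
      (p.f1 _ _ (u.f1 z z' ρ)).val = (p.f1 _ _ (v.f1 z z' ρ)).val) :
    FibHomotopic EffPS p u v := by
  refine ⟨Pobj p hp, Pr p hp, Ps p hp, Pt p hp, relPathObj p hp,
    { f0 := fun z => ⟨(u.f0 z, v.f0 z, (η z).val), (η z).2, heq z⟩
      f1 := fun z z' ρ => ⟨Nat.pair (u.f1 z z' ρ).val (v.f1 z z' ρ).val,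
        pairHom_intro p (u.f1 z z' ρ) (v.f1 z z' ρ) (hcell z z' ρ)⟩
      tr0 := u.tr0.pair (v.tr0.pair hηc)
      tr1 := u.tr1.pair v.tr1 }, ?_, ?_⟩
  · refine effHom_ext (fun z => rfl) (fun z z' ρ => ?_)
    show (Nat.pair (u.f1 z z' ρ).val (v.f1 z z' ρ).val).unpair.1 = (u.f1 z z' ρ).val
    simp
  · refine effHom_ext (fun z => rfl) (fun z z' ρ => ?_)
    show (Nat.pair (u.f1 z z' ρ).val (v.f1 z z' ρ).val).unpair.2 = (v.f1 z z' ρ).val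
    simp

end EffPaper
namespace EffPaper
open CategoryTheory

/-- If `r` is an equivalence with two retractions `s, t`, then `s` and `t` are
pointwise connected by cells, computably. -/
theorem lemA {P X : EffObj} {r : X ⟶ P} {s t : P ⟶ X} (hre : EffEqv r)
    (hrs : r ≫ s = 𝟙 X) (hrt : r ≫ t = 𝟙 X) :
    ∃ η : ∀ q : P.A, X.Cell (s.f0 q) (t.f0 q),
      CompComputes P.α (fun q => (η q).val) := by
  obtain ⟨iv, hiv⟩ := obj_inv X
  obtain ⟨cp, hcp⟩ := obj_comp X
  obtain ⟨r', h1, h2⟩ := hre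
  obtain ⟨o, hom, hoc⟩ := h2.toComputes
  set μ : ∀ q : P.A, P.Cell (r.f0 (r'.f0 q)) q := fun q => ⟨o q, hom q⟩ with hμ
  have hsr : ∀ x, s.f0 (r.f0 x) = x := congr_f0 hrs
  have htr : ∀ x, t.f0 (r.f0 x) = x := congr_f0 hrt
  set ξ1 : ∀ q : P.A, X.Cell (r'.f0 q) (s.f0 q) := fun q =>
    ⟨(s.f1 _ _ (μ q)).val,
      (congrArg (fun z => X.hom z (s.f0 q)) (hsr (r'.f0 q))) ▸ (s.f1 _ _ (μ q)).2⟩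
    with hξ1
  set ξ2 : ∀ q : P.A, X.Cell (r'.f0 q) (t.f0 q) := fun q =>
    ⟨(t.f1 _ _ (μ q)).val,
      (congrArg (fun z => X.hom z (t.f0 q)) (htr (r'.f0 q))) ▸ (t.f1 _ _ (μ q)).2⟩
    with hξ2
  set ζ : ∀ q : P.A, X.Cell (s.f0 q) (r'.f0 q) := fun q =>
    iv ⟨r'.f0 q, s.f0 q, ξ1 q⟩ with hζ
  have hrr'α : CompComputes P.α (fun q => P.α (r.f0 (r'.f0 q))) :=
    (r.tr0.precomp r'.f0).comp r'.tr0
  have hξ1c : CompComputes P.α (fun q => (ξ1 q).val) :=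
    (s.tr1.precomp (fun q => ⟨r.f0 (r'.f0 q), q, μ q⟩)).comp
      (hrr'α.pair ((CompComputes.id _).pair hoc))
  have hξ2c : CompComputes P.α (fun q => (ξ2 q).val) :=
    (t.tr1.precomp (fun q => ⟨r.f0 (r'.f0 q), q, μ q⟩)).comp
      (hrr'α.pair ((CompComputes.id _).pair hoc))
  have hζc : CompComputes P.α (fun q => (ζ q).val) :=
    (hiv.precomp (fun q => ⟨r'.f0 q, s.f0 q, ξ1 q⟩)).comp
      (r'.tr0.pair (s.tr0.pair hξ1c))
  refine ⟨fun q => cp ⟨s.f0 q, r'.f0 q, t.f0 q, ζ q, ξ2 q⟩, ?_⟩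
  exact (hcp.precomp (fun q => ⟨s.f0 q, r'.f0 q, t.f0 q, ζ q, ξ2 q⟩)).comp
    (s.tr0.pair (r'.tr0.pair (t.tr0.pair (hζc.pair hξ2c))))

/-- A trivial fibration admits a section over any map. -/
theorem lemB {P W Q : EffObj} {k : P ⟶ W} (hkf : EffFib k) (hke : EffEqv k)
    (m : Q ⟶ W) : ∃ n : Q ⟶ P, n ≫ k = m := by
  obtain ⟨iv, hiv⟩ := obj_inv P
  obtain ⟨cp, hcp⟩ := obj_comp P
  obtain ⟨e, he1, he2⟩ := hke
  obtain ⟨θ, hθm, hθc⟩ := he2.toComputes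
  obtain ⟨P0, P1, hPa, hPb, hP0c, hP1c⟩ := fib_lift1 hkf
  obtain ⟨L, hLs, hLc⟩ := fib_lift2 hkf
  set tW : W.A → LiftIx k := fun w => ⟨e.f0 w, w, ⟨θ w, hθm w⟩⟩ with htW
  set n0 : W.A → P.A := fun w => P0 (tW w) with hn0def
  have hn0 : ∀ w, k.f0 (n0 w) = w := fun w => hPa (tW w)
  set dW : ∀ w, P.Cell (e.f0 w) (n0 w) := fun w => P1 (tW w) with hdW
  have hn0c : CompComputes W.α (fun w => P.α (n0 w)) :=
    (hP0c.precomp tW).comp (e.tr0.pair ((CompComputes.id _).pair hθc))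
  have hdWc : CompComputes W.α (fun w => (dW w).val) :=
    (hP1c.precomp tW).comp (e.tr0.pair ((CompComputes.id _).pair hθc))
  have memπ : ∀ (q q' : Q.A) (ρ : Q.Cell q q'), (m.f1 q q' ρ).val ∈
      W.hom (k.f0 (n0 (m.f0 q))) (k.f0 (n0 (m.f0 q'))) := by
    intro q q' ρ
    rw [hn0, hn0]
    exact (m.f1 q q' ρ).2
  set di : ∀ q : Q.A, P.Cell (n0 (m.f0 q)) (e.f0 (m.f0 q)) := fun q =>
    iv ⟨e.f0 (m.f0 q), n0 (m.f0 q), dW (m.f0 q)⟩ with hdi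
  set c12 : ∀ (q q' : Q.A) (ρ : Q.Cell q q'),
      P.Cell (n0 (m.f0 q)) (e.f0 (m.f0 q')) := fun q q' ρ =>
    cp ⟨n0 (m.f0 q), e.f0 (m.f0 q), e.f0 (m.f0 q'), di q,
      e.f1 _ _ (m.f1 q q' ρ)⟩ with hc12
  set c123 : ∀ (q q' : Q.A) (ρ : Q.Cell q q'),
      P.Cell (n0 (m.f0 q)) (n0 (m.f0 q')) := fun q q' ρ =>
    cp ⟨n0 (m.f0 q), e.f0 (m.f0 q'), n0 (m.f0 q'), c12 q q' ρ, dW (m.f0 q')⟩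
    with hc123
  -- computability over the sigma type of cells of Q
  set T := (q : Q.A) × (q' : Q.A) × Q.Cell q q' with hT
  set In : T → ℕ := fun x => Nat.pair (Q.α x.1) (Nat.pair (Q.α x.2.1) x.2.2.val)
    with hIn
  have hQ1 : CompComputes In (fun x : T => Q.α x.1) :=
    CompComputes.ofPrim _ pL (fun x => by simp [hIn])
  have hQ2 : CompComputes In (fun x : T => Q.α x.2.1) :=
    CompComputes.ofPrim _ (pL.comp pR) (fun x => by simp [hIn])
  have hmq : CompComputes In (fun x : T => W.α (m.f0 x.1)) :=
    (m.tr0.precomp (fun x : T => x.1)).comp hQ1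
  have hmq' : CompComputes In (fun x : T => W.α (m.f0 x.2.1)) :=
    (m.tr0.precomp (fun x : T => x.2.1)).comp hQ2
  have hmf1 : CompComputes In (fun x : T => (m.f1 x.1 x.2.1 x.2.2).val) := m.tr1
  have hef1 : CompComputes In
      (fun x : T => (e.f1 _ _ (m.f1 x.1 x.2.1 x.2.2)).val) :=
    (e.tr1.precomp (fun x : T =>
      ⟨m.f0 x.1, m.f0 x.2.1, m.f1 x.1 x.2.1 x.2.2⟩)).comp
      (hmq.pair (hmq'.pair hmf1))
  have hn0q : CompComputes In (fun x : T => P.α (n0 (m.f0 x.1))) :=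
    (hn0c.precomp (fun x : T => m.f0 x.1)).comp hmq
  have hn0q' : CompComputes In (fun x : T => P.α (n0 (m.f0 x.2.1))) :=
    (hn0c.precomp (fun x : T => m.f0 x.2.1)).comp hmq'
  have heq : CompComputes In (fun x : T => P.α (e.f0 (m.f0 x.1))) :=
    (e.tr0.precomp (fun x : T => m.f0 x.1)).comp hmq
  have heq' : CompComputes In (fun x : T => P.α (e.f0 (m.f0 x.2.1))) :=
    (e.tr0.precomp (fun x : T => m.f0 x.2.1)).comp hmq'
  have hdq : CompComputes In (fun x : T => (dW (m.f0 x.1)).val) :=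
    (hdWc.precomp (fun x : T => m.f0 x.1)).comp hmq
  have hdq' : CompComputes In (fun x : T => (dW (m.f0 x.2.1)).val) :=
    (hdWc.precomp (fun x : T => m.f0 x.2.1)).comp hmq'
  have hdic : CompComputes In (fun x : T => (di x.1).val) :=
    (hiv.precomp (fun x : T =>
      ⟨e.f0 (m.f0 x.1), n0 (m.f0 x.1), dW (m.f0 x.1)⟩)).comp
      (heq.pair (hn0q.pair hdq))
  have hc12c : CompComputes In (fun x : T => (c12 x.1 x.2.1 x.2.2).val) :=
    (hcp.precomp (fun x : T =>
      ⟨n0 (m.f0 x.1), e.f0 (m.f0 x.1), e.f0 (m.f0 x.2.1), di x.1,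
        e.f1 _ _ (m.f1 x.1 x.2.1 x.2.2)⟩)).comp
      (hn0q.pair (heq.pair (heq'.pair (hdic.pair hef1))))
  have hc123c : CompComputes In (fun x : T => (c123 x.1 x.2.1 x.2.2).val) :=
    (hcp.precomp (fun x : T =>
      ⟨n0 (m.f0 x.1), e.f0 (m.f0 x.2.1), n0 (m.f0 x.2.1), c12 x.1 x.2.1 x.2.2,
        dW (m.f0 x.2.1)⟩)).comp
      (hn0q.pair (heq'.pair (hn0q'.pair (hc12c.pair hdq'))))
  refine ⟨{ f0 := fun q => n0 (m.f0 q)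
            f1 := fun q q' ρ => L ⟨n0 (m.f0 q), n0 (m.f0 q'), c123 q q' ρ,
              ⟨(m.f1 q q' ρ).val, memπ q q' ρ⟩⟩
            tr0 := (hn0c.precomp m.f0).comp m.tr0
            tr1 := (hLc.precomp (fun x : T =>
                ⟨n0 (m.f0 x.1), n0 (m.f0 x.2.1), c123 x.1 x.2.1 x.2.2,
                  ⟨(m.f1 x.1 x.2.1 x.2.2).val, memπ x.1 x.2.1 x.2.2⟩⟩)).comp
              (hn0q.pair (hn0q'.pair (hc123c.pair hmf1))) }, ?_⟩
  refine effHom_ext (fun q => hn0 (m.f0 q)) (fun q q' ρ => ?_)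
  exact hLs ⟨n0 (m.f0 q), n0 (m.f0 q'), c123 q q' ρ,
    ⟨(m.f1 q q' ρ).val, memπ q q' ρ⟩⟩

/-- From a propositional fibration, connecting cells between any two points of the
same fibre can be computed. -/
theorem conn_of_prop {C' A : EffObj} {h' : C' ⟶ A} (hfib : EffFib h')
    (hnt : IsNTypeFib EffPS 1 h') :
    ∃ conn : ∀ v : VA h', C'.Cell v.1.1 v.1.2,
      CompComputes (fun v : VA h' => (Vobj h' hfib).α v) (fun v => (conn v).val) := by
  obtain ⟨-, PY, W, r, s, t, π₁, π₂, k, hrel, hpb, hk1, hk2, hkfib, hkeqv⟩ := hnt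
  obtain ⟨m, ⟨hm1, hm2⟩, -⟩ :=
    hpb.2 (Vobj h' hfib) (Vp1 h' hfib) (Vp2 h' hfib) (Vcone h' hfib)
  obtain ⟨n, hnk⟩ := lemB hkfib hkeqv m
  obtain ⟨hre, hrs, hrt, hstp, -⟩ := hrel
  obtain ⟨η, hηc⟩ := lemA hre hrs hrt
  have hs : ∀ v : VA h', s.f0 (n.f0 v) = v.1.1 := by
    intro v
    have e1 : π₁.f0 (k.f0 (n.f0 v)) = s.f0 (n.f0 v) := congr_f0 hk1 (n.f0 v)
    have e2 : k.f0 (n.f0 v) = m.f0 v := congr_f0 hnk v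
    have e3 : π₁.f0 (m.f0 v) = v.1.1 := congr_f0 hm1 v
    rw [← e1, e2, e3]
  have ht : ∀ v : VA h', t.f0 (n.f0 v) = v.1.2 := by
    intro v
    have e1 : π₂.f0 (k.f0 (n.f0 v)) = t.f0 (n.f0 v) := congr_f0 hk2 (n.f0 v)
    have e2 : k.f0 (n.f0 v) = m.f0 v := congr_f0 hnk v
    have e3 : π₂.f0 (m.f0 v) = v.1.2 := congr_f0 hm2 v
    rw [← e1, e2, e3]
  refine ⟨fun v => ⟨(η (n.f0 v)).val, ?_⟩, (hηc.precomp n.f0).comp n.tr0⟩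
  have E : C'.hom (s.f0 (n.f0 v)) (t.f0 (n.f0 v)) = C'.hom v.1.1 v.1.2 := by
    rw [hs v, ht v]
  exact E ▸ (η (n.f0 v)).2

end EffPaper
namespace EffPaper
open CategoryTheory

theorem projFib {B A : EffObj} (f : B ⟶ A) (hf : EffFib f) :
    EffFib (PropTruncProj f) := by
  obtain ⟨P0, P1, hPa, hPb, hP0c, hP1c⟩ := fib_lift1 hf
  refine effFib_intro _ ?_ ?_
  · refine ⟨fun t => P0 t, fun t => ⟨t.2.2.val, ?_⟩, fun t => hPa t, fun t => rfl,
      hP0c, ?_⟩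
    · have E : A.hom (f.f0 t.1) (f.f0 (P0 t)) = A.hom (f.f0 t.1) t.2.1 := by
        rw [hPa t]
      exact E.symm ▸ t.2.2.2
    · exact CompComputes.ofPrim _ (pR.comp pR) (fun t => by simp [PropTrunc])
  · refine ⟨fun t => ⟨t.2.2.2.val, t.2.2.2.2⟩, fun t => rfl, ?_⟩
    exact CompComputes.ofPrim _ (pR.comp (pR.comp pR)) (fun t => by simp [PropTrunc])

theorem iota_mem {B A : EffObj} (f : B ⟶ A) (hf : EffFib f)
    (w : VA (PropTruncProj f)) :
    (idC A (f.f0 w.1.1)).val ∈ (PropTrunc f).hom w.1.1 w.1.2 := by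
  have E : A.hom (f.f0 w.1.1) (f.f0 w.1.1) = A.hom (f.f0 w.1.1) (f.f0 w.1.2) := by
    rw [show f.f0 w.1.1 = f.f0 w.1.2 from w.2]
  exact E ▸ (idC A (f.f0 w.1.1)).2

/-- The homotopy inverse of `Ph` for `PropTruncProj f`. -/
noncomputable def iota {B A : EffObj} (f : B ⟶ A) (hf : EffFib f) :
    Vobj (PropTruncProj f) (projFib f hf) ⟶ Pobj (PropTruncProj f) (projFib f hf) where
  f0 w := ⟨(w.1.1, w.1.2, (idC A (f.f0 w.1.1)).val), iota_mem f hf w, w.2⟩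
  f1 w w' nn := ⟨nn.val, nn.2⟩
  tr0 := (CompComputes.ofPrim _ pL (fun w => by simp [Vobj, Pobj, PropTrunc])).pair
    (((CompComputes.ofPrim _ pR (fun w => by simp [Vobj, Pobj, PropTrunc]))).pair
      (((idC_comp A).precomp
          (fun w : VA (PropTruncProj f) => f.f0 w.1.1)).comp
        ((f.tr0.precomp (fun w : VA (PropTruncProj f) => w.1.1)).comp
          (CompComputes.ofPrim _ pL (fun w => by simp [Vobj, PropTrunc])))))
  tr1 := CompComputes.ofPrim _ (pR.comp pR) (fun t => by simp [Vobj, Pobj, PropTrunc])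

theorem iota_Ph {B A : EffObj} (f : B ⟶ A) (hf : EffFib f) :
    iota f hf ≫ Ph (PropTruncProj f) (projFib f hf) = 𝟙 _ :=
  effHom_ext (fun w => Subtype.ext rfl) (fun w w' nn => rfl)

theorem Ph_iota_htp {B A : EffObj} (f : B ⟶ A) (hf : EffFib f) :
    EffHomotopic (Ph (PropTruncProj f) (projFib f hf) ≫ iota f hf)
      (𝟙 (Pobj (PropTruncProj f) (projFib f hf))) := by
  set p := PropTruncProj f
  have hσc : CompComputes (fun q : PA p => (Pobj p (projFib f hf)).α q)
      (fun q => q.1.2.2) :=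
    CompComputes.ofPrim _ (pR.comp pR) (fun q => by simp [Pobj])
  refine (hσc.pair hσc).toFinds (fun q => ?_)
  have m1 : q.1.2.2 ∈ (PropTrunc f).hom q.1.1 q.1.1 := by
    have E : A.hom (f.f0 q.1.1) (f.f0 q.1.2.1) = A.hom (f.f0 q.1.1) (f.f0 q.1.1) := by
      rw [show f.f0 q.1.1 = f.f0 q.1.2.1 from q.2.2]
    exact E ▸ q.2.1
  have m2 : q.1.2.2 ∈ (PropTrunc f).hom q.1.2.1 q.1.2.1 := by
    have E : A.hom (f.f0 q.1.1) (f.f0 q.1.2.1) =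
        A.hom (f.f0 q.1.2.1) (f.f0 q.1.2.1) := by
      rw [show f.f0 q.1.1 = f.f0 q.1.2.1 from q.2.2]
    exact E ▸ q.2.1
  exact pairHom_intro p (⟨q.1.2.2, m1⟩ : (PropTrunc f).Cell q.1.1 q.1.1)
    (⟨q.1.2.2, m2⟩ : (PropTrunc f).Cell q.1.2.1 q.1.2.1) rfl

theorem Ph_eqv {B A : EffObj} (f : B ⟶ A) (hf : EffFib f) :
    EffEqv (Ph (PropTruncProj f) (projFib f hf)) :=
  ⟨iota f hf, Ph_iota_htp f hf,
    homotopic_of_f0_eq (fun w => congr_f0 (iota_Ph f hf) w)⟩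

theorem projNType {B A : EffObj} (f : B ⟶ A) (hf : EffFib f) :
    IsNTypeFib EffPS 1 (PropTruncProj f) := by
  set p := PropTruncProj f
  set hp := projFib f hf
  exact ⟨hp, Pobj p hp, Vobj p hp, Pr p hp, Ps p hp, Pt p hp, Vp1 p hp, Vp2 p hp,
    Ph p hp, relPathObj p hp, Vobj_isPB p hp, Ph_Vp1 p hp, Ph_Vp2 p hp,
    Ph_fib p hp, Ph_eqv f hf⟩

end EffPaper
namespace EffPaper
open CategoryTheory

theorem EFF_propositional_truncation' {B A : EffObj} (f : B ⟶ A) (hf : EffFib f) :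
    PropTruncUnit f ≫ PropTruncProj f = f ∧
    IsNTypeFib EffPS 1 (PropTruncProj f) ∧
    (∀ (C' : EffObj) (g' : B ⟶ C') (h' : C' ⟶ A), g' ≫ h' = f →
      IsNTypeFib EffPS 1 h' →
      (∃ d : PropTrunc f ⟶ C', d ≫ h' = PropTruncProj f ∧
        FibHomotopic EffPS h' (PropTruncUnit f ≫ d) g') ∧
      (∀ d d' : PropTrunc f ⟶ C',
        d ≫ h' = PropTruncProj f → d' ≫ h' = PropTruncProj f →
        FibHomotopic EffPS h' (PropTruncUnit f ≫ d) g' →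
        FibHomotopic EffPS h' (PropTruncUnit f ≫ d') g' →
        FibHomotopic EffPS h' d d')) := by
  refine ⟨effHom_ext (fun b => rfl) (fun b b' ρ => rfl), projNType f hf, ?_⟩
  intro C' g' h' hgh hnt
  have hfib' : EffFib h' := hnt.1
  obtain ⟨conn, hconnc⟩ := conn_of_prop hfib' hnt
  constructor
  · -- existence of d
    obtain ⟨P0, P1, hPa, hPb, hP0c, hP1c⟩ := fib_lift1 hfib'
    obtain ⟨L, hLs, hLc⟩ := fib_lift2 hfib'
    obtain ⟨cp, hcp⟩ := obj_comp C'
    have hfg0 : ∀ b, h'.f0 (g'.f0 b) = f.f0 b := congr_f0 hgh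
    have hfg1 : ∀ b b' (ρ : B.Cell b b'),
        (h'.f1 _ _ (g'.f1 b b' ρ)).val = (f.f1 b b' ρ).val := congr_f1val hgh
    have memσ' : ∀ (b b' : B.A) (σ : (PropTrunc f).Cell b b'),
        σ.val ∈ A.hom (h'.f0 (g'.f0 b)) (f.f0 b') := by
      intro b b' σ
      rw [hfg0 b]
      exact σ.2
    set t1 : ∀ (b b' : B.A), (PropTrunc f).Cell b b' → LiftIx h' :=
      fun b b' σ => ⟨g'.f0 b, f.f0 b', ⟨σ.val, memσ' b b' σ⟩⟩ with ht1
    have hvp : ∀ (b b' : B.A) (σ : (PropTrunc f).Cell b b'),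
        h'.f0 (P0 (t1 b b' σ)) = h'.f0 (g'.f0 b') := by
      intro b b' σ
      rw [hPa (t1 b b' σ), hfg0 b']
    set vp : ∀ (b b' : B.A), (PropTrunc f).Cell b b' → VA h' :=
      fun b b' σ => ⟨(P0 (t1 b b' σ), g'.f0 b'), hvp b b' σ⟩ with hvpdef
    set c12 : ∀ (b b' : B.A) (σ : (PropTrunc f).Cell b b'),
        C'.Cell (g'.f0 b) (g'.f0 b') :=
      fun b b' σ => cp ⟨g'.f0 b, P0 (t1 b b' σ), g'.f0 b',
        P1 (t1 b b' σ), conn (vp b b' σ)⟩ with hc12def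
    have memσ2 : ∀ (b b' : B.A) (σ : (PropTrunc f).Cell b b'),
        σ.val ∈ A.hom (h'.f0 (g'.f0 b)) (h'.f0 (g'.f0 b')) := by
      intro b b' σ
      rw [hfg0 b, hfg0 b']
      exact σ.2
    set dc : ∀ (b b' : B.A) (σ : (PropTrunc f).Cell b b'),
        C'.Cell (g'.f0 b) (g'.f0 b') :=
      fun b b' σ => L ⟨g'.f0 b, g'.f0 b', c12 b b' σ, ⟨σ.val, memσ2 b b' σ⟩⟩
      with hdcdef
    -- computability over the sigma type of cells of `PropTrunc f`
    set T := (b : (PropTrunc f).A) × (b' : (PropTrunc f).A) × (PropTrunc f).Cell b b'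
      with hTdef
    set In : T → ℕ := fun x =>
      Nat.pair ((PropTrunc f).α x.1) (Nat.pair ((PropTrunc f).α x.2.1) x.2.2.val)
      with hIn
    have hb : CompComputes In (fun x : T => B.α x.1) :=
      CompComputes.ofPrim _ pL (fun x => by simp [hIn, PropTrunc])
    have hb' : CompComputes In (fun x : T => B.α x.2.1) :=
      CompComputes.ofPrim _ (pL.comp pR) (fun x => by simp [hIn, PropTrunc])
    have hσv : CompComputes In (fun x : T => x.2.2.val) :=
      CompComputes.ofPrim _ (pR.comp pR) (fun x => by simp [hIn, PropTrunc])
    have hgb : CompComputes In (fun x : T => C'.α (g'.f0 x.1)) :=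
      (g'.tr0.precomp (fun x : T => x.1)).comp hb
    have hgb' : CompComputes In (fun x : T => C'.α (g'.f0 x.2.1)) :=
      (g'.tr0.precomp (fun x : T => x.2.1)).comp hb'
    have hfb' : CompComputes In (fun x : T => A.α (f.f0 x.2.1)) :=
      (f.tr0.precomp (fun x : T => x.2.1)).comp hb'
    have hc'' : CompComputes In (fun x : T => C'.α (P0 (t1 x.1 x.2.1 x.2.2))) :=
      (hP0c.precomp (fun x : T => t1 x.1 x.2.1 x.2.2)).comp
        (hgb.pair (hfb'.pair hσv))
    have hcell1 : CompComputes In (fun x : T => (P1 (t1 x.1 x.2.1 x.2.2)).val) :=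
      (hP1c.precomp (fun x : T => t1 x.1 x.2.1 x.2.2)).comp
        (hgb.pair (hfb'.pair hσv))
    have hconn2 : CompComputes In (fun x : T => (conn (vp x.1 x.2.1 x.2.2)).val) :=
      (hconnc.precomp (fun x : T => vp x.1 x.2.1 x.2.2)).comp (hc''.pair hgb')
    have hc12c : CompComputes In (fun x : T => (c12 x.1 x.2.1 x.2.2).val) :=
      (hcp.precomp (fun x : T => ⟨g'.f0 x.1, P0 (t1 x.1 x.2.1 x.2.2), g'.f0 x.2.1,
        P1 (t1 x.1 x.2.1 x.2.2), conn (vp x.1 x.2.1 x.2.2)⟩)).comp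
        (hgb.pair (hc''.pair (hgb'.pair (hcell1.pair hconn2))))
    have hdcc : CompComputes In (fun x : T => (dc x.1 x.2.1 x.2.2).val) :=
      (hLc.precomp (fun x : T => ⟨g'.f0 x.1, g'.f0 x.2.1, c12 x.1 x.2.1 x.2.2,
        ⟨x.2.2.val, memσ2 x.1 x.2.1 x.2.2⟩⟩)).comp
        (hgb.pair (hgb'.pair (hc12c.pair hσv)))
    refine ⟨{ f0 := fun b => g'.f0 b
              f1 := dc
              tr0 := g'.tr0
              tr1 := hdcc }, ?_, ?_⟩
    · refine effHom_ext (fun b => hfg0 b) (fun b b' σ => ?_)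
      exact hLs ⟨g'.f0 b, g'.f0 b', c12 b b' σ, ⟨σ.val, memσ2 b b' σ⟩⟩
    · refine mk_fibHom h' hfib' _ g' (fun b => rfl)
        (fun b => idC C' (g'.f0 b))
        (((idC_comp C').precomp g'.f0).comp g'.tr0)
        (fun b b' ρ => ?_)
      have e1 := hLs ⟨g'.f0 b, g'.f0 b',
        c12 b b' ((PropTruncUnit f).f1 b b' ρ),
        ⟨((PropTruncUnit f).f1 b b' ρ).val,
          memσ2 b b' ((PropTruncUnit f).f1 b b' ρ)⟩⟩
      exact e1.trans (hfg1 b b' ρ).symm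
  · -- uniqueness of d
    rintro d d' hd hd' - -
    have heq2 : ∀ b, h'.f0 (d.f0 b) = h'.f0 (d'.f0 b) := fun b =>
      (congr_f0 hd b).trans (congr_f0 hd' b).symm
    exact mk_fibHom h' hfib' d d' heq2
      (fun b => conn ⟨(d.f0 b, d'.f0 b), heq2 b⟩)
      ((hconnc.precomp (fun b : (PropTrunc f).A =>
        (⟨(d.f0 b, d'.f0 b), heq2 b⟩ : VA h'))).comp (d.tr0.pair d'.tr0))
      (fun b b' σ => (congr_f1val hd b b' σ).trans (congr_f1val hd' b b' σ).symm)

end EffPaper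
namespace EffPaper

/-- In `EFF` propositional truncation exists: every fibration
`f : B ⟶ A` factors as a map `g : B ⟶ C` followed by a propositional fibration
`h : C ⟶ A` — concretely one may take `C := (B, β, 𝒞)` with `𝒞(b,b') = 𝒜(fb,fb')` —
universally: for any other such factorisation `g' : B ⟶ C'`, `h' : C' ⟶ A` with `h'`
a propositional fibration, there is a `d : C ⟶ C'` over `A` with `d ∘ g ≃_A g'`, and
any two such maps `d` are fibrewise homotopic over `A`. -/
theorem EFF_propositional_truncation {B A : EffObj} (f : B ⟶ A) (hf : EffFib f) :
    PropTruncUnit f ≫ PropTruncProj f = f ∧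
    IsNTypeFib EffPS 1 (PropTruncProj f) ∧
    (∀ (C' : EffObj) (g' : B ⟶ C') (h' : C' ⟶ A), g' ≫ h' = f →
      IsNTypeFib EffPS 1 h' →
      (∃ d : PropTrunc f ⟶ C', d ≫ h' = PropTruncProj f ∧
        FibHomotopic EffPS h' (PropTruncUnit f ≫ d) g') ∧
      (∀ d d' : PropTrunc f ⟶ C',
        d ≫ h' = PropTruncProj f → d' ≫ h' = PropTruncProj f →
        FibHomotopic EffPS h' (PropTruncUnit f ≫ d) g' →
        FibHomotopic EffPS h' (PropTruncUnit f ≫ d') g' →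
        FibHomotopic EffPS h' d d')) :=
  EFF_propositional_truncation' f hf

end EffPaper
end

section
/- The class of discrete fibrations in the path category EFF does not have a univalent representation. -/
open CategoryTheory
namespace EffPaper


/-! ### Basic helpers -/

lemma f0_congr {B A : EffObj} {f g : B ⟶ A} (h : f = g) (b : B.A) :
    EffHom.f0 f b = EffHom.f0 g b := by rw [h]

lemma f1_val_congr {B A : EffObj} {f g : B ⟶ A} (h : f = g) (b b' : B.A) (ρ : B.Cell b b') :
    (EffHom.f1 f b b' ρ).val = (EffHom.f1 g b b' ρ).val := by rw [h]

lemma EffHom.ext_val {B A : EffObj} {f g : EffHom B A}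
    (h0 : ∀ b, f.f0 b = g.f0 b)
    (h1 : ∀ b b' (ρ : B.Cell b b'), (f.f1 b b' ρ).val = (g.f1 b b' ρ).val) : f = g := by
  obtain ⟨f0, f1, ft0, ft1⟩ := f
  obtain ⟨g0, g1, gt0, gt1⟩ := g
  dsimp at h0 h1
  have e0 : f0 = g0 := funext h0
  subst e0
  have e1 : f1 = g1 := by
    funext b b' ρ
    exact Subtype.ext (h1 b b' ρ)
  subst e1
  rfl

lemma EffHomotopic.pointwise {B A : EffObj} {f g : B ⟶ A} (h : EffHomotopic f g) (b : B.A) :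
    ∃ m, m ∈ A.hom (EffHom.f0 f b) (EffHom.f0 g b) := by
  obtain ⟨F, _, s⟩ := h
  obtain ⟨k, _, hk⟩ := s b
  exact ⟨k, hk⟩

lemma EffObj.inv_pointwise (A : EffObj) {a a' : A.A} {m : ℕ} (hm : m ∈ A.hom a a') :
    ∃ m', m' ∈ A.hom a' a := by
  obtain ⟨F, _, s⟩ := A.invc
  obtain ⟨k, _, hk⟩ := s ⟨(a, a', m), hm⟩
  exact ⟨k, hk⟩

lemma EffObj.comp_pointwise (A : EffObj) {a b c : A.A} {m₁ m₂ : ℕ}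
    (h₁ : m₁ ∈ A.hom a b) (h₂ : m₂ ∈ A.hom b c) : ∃ m, m ∈ A.hom a c := by
  obtain ⟨F, _, s⟩ := A.compc
  obtain ⟨k, _, hk⟩ := s ⟨(a, b, c, m₁, m₂), h₁, h₂⟩
  exact ⟨k, hk⟩

/-! ### Homotopy calculus -/

lemma effHomotopic_refl {B A : EffObj} (f : B ⟶ A) : EffHomotopic f f :=
  A.idc.via (EffHom.f0 f) f.tr0

lemma EffHomotopic.trans' {B A : EffObj} {f g h : B ⟶ A}
    (hfg : EffHomotopic f g) (hgh : EffHomotopic g h) : EffHomotopic f h := by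
  obtain ⟨o₁, ho₁, t₁⟩ := hfg.toComputes
  obtain ⟨o₂, ho₂, t₂⟩ := hgh.toComputes
  exact A.compc.via
    (fun b => ⟨(EffHom.f0 f b, EffHom.f0 g b, EffHom.f0 h b, o₁ b, o₂ b), ho₁ b, ho₂ b⟩)
    (CompComputes.pair f.tr0 (CompComputes.pair g.tr0
      (CompComputes.pair h.tr0 (CompComputes.pair t₁ t₂))))

lemma EffHomotopic.conj {A B : EffObj} (f : A ⟶ B) (f' : B ⟶ A) {u v : B ⟶ B}
    (h : EffHomotopic u v) : EffHomotopic (f ≫ u ≫ f') (f ≫ v ≫ f') := by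
  obtain ⟨o, ho, t⟩ := h.toComputes
  have hval : CompComputes (fun a => A.α a)
      (fun a => (EffHom.f1 f' _ _ ⟨o (EffHom.f0 f a), ho (EffHom.f0 f a)⟩).val) := by
    refine (f'.tr1.precomp
      (fun a => ⟨EffHom.f0 u (EffHom.f0 f a), EffHom.f0 v (EffHom.f0 f a),
        ⟨o (EffHom.f0 f a), ho (EffHom.f0 f a)⟩⟩)).comp ?_
    exact CompComputes.pair ((u.tr0.precomp (EffHom.f0 f)).comp f.tr0)
      (CompComputes.pair ((v.tr0.precomp (EffHom.f0 f)).comp f.tr0)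
        ((t.precomp (EffHom.f0 f)).comp f.tr0))
  exact hval.toFinds (fun a => (EffHom.f1 f' _ _ _).2)

lemma effEqv_of_iso {A B : EffObj} {f : A ⟶ B} {g : B ⟶ A}
    (h1 : f ≫ g = 𝟙 A) (h2 : g ≫ f = 𝟙 B) : EffEqv f := by
  refine ⟨g, ?_, ?_⟩
  · rw [h1]; exact effHomotopic_refl _
  · rw [h2]; exact effHomotopic_refl _

lemma effEqv_id (B : EffObj) : EffEqv (𝟙 B) :=
  effEqv_of_iso (Category.id_comp _) (Category.id_comp _)

lemma EffEqv.comp' {A B C : EffObj} {f : A ⟶ B} {g : B ⟶ C}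
    (hf : EffEqv f) (hg : EffEqv g) : EffEqv (f ≫ g) := by
  obtain ⟨f', hf1, hf2⟩ := hf
  obtain ⟨g', hg1, hg2⟩ := hg
  refine ⟨g' ≫ f', ?_, ?_⟩
  · have h1 : EffHomotopic (f ≫ (g ≫ g') ≫ f') (f ≫ 𝟙 B ≫ f') := EffHomotopic.conj f f' hg1
    have e1 : (f ≫ g) ≫ g' ≫ f' = f ≫ (g ≫ g') ≫ f' := by simp
    have e2 : f ≫ 𝟙 B ≫ f' = f ≫ f' := by simp
    rw [e1]
    exact (e2 ▸ h1).trans' hf1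
  · have h1 : EffHomotopic (g' ≫ (f' ≫ f) ≫ g) (g' ≫ 𝟙 B ≫ g) := EffHomotopic.conj g' g hf2
    have e1 : (g' ≫ f') ≫ f ≫ g = g' ≫ (f' ≫ f) ≫ g := by simp
    have e2 : g' ≫ 𝟙 B ≫ g = g' ≫ g := by simp
    rw [e1]
    exact (e2 ▸ h1).trans' hg2


/-! ### The terminal object and the two-element discrete object -/

def constZeroFinds {X : Sort*} (I : X → ℕ) (S : X → Set ℕ) (h : ∀ x, 0 ∈ S x) :
    CompFinds I S :=
  ⟨fun _ => Part.some 0, (Computable.const 0).partrec, fun x => ⟨0, Part.mem_some 0, h x⟩⟩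

def Tobj : EffObj where
  A := PUnit
  α := fun _ => 0
  hom := fun _ _ => {0}
  idc := constZeroFinds _ _ (fun _ => rfl)
  invc := constZeroFinds _ _ (fun _ => rfl)
  compc := constZeroFinds _ _ (fun _ => rfl)

lemma T_hom_unique {X : EffObj} (u v : X ⟶ Tobj) : u = v := by
  haveI : Subsingleton Tobj.A := ⟨fun a b => by cases a; cases b; rfl⟩
  refine EffHom.ext_val (fun b => Subsingleton.elim _ _) (fun b b' ρ => ?_)
  have h1 : (EffHom.f1 u b b' ρ).val ∈ ({0} : Set ℕ) := (EffHom.f1 u b b' ρ).2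
  have h2 : (EffHom.f1 v b b' ρ).val ∈ ({0} : Set ℕ) := (EffHom.f1 v b b' ρ).2
  rw [Set.mem_singleton_iff] at h1 h2
  rw [h1, h2]

def D2hom (b b' : Bool) : Set ℕ := if b = b' then {0} else ∅

lemma D2hom_eq {b b' : Bool} {m : ℕ} (hm : m ∈ D2hom b b') : b = b' := by
  by_contra h
  simp [D2hom, h] at hm

lemma D2hom_self (b b' : Bool) (h : b = b') : (0 : ℕ) ∈ D2hom b b' := by
  subst h; simp [D2hom]

def D2 : EffObj where
  A := Bool
  α := fun b => cond b 1 0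
  hom := D2hom
  idc := constZeroFinds _ _ (fun b => D2hom_self b b rfl)
  invc := constZeroFinds _ _ (fun x => D2hom_self _ _ (D2hom_eq x.2).symm)
  compc := constZeroFinds _ _ (fun x => D2hom_self _ _ ((D2hom_eq x.2.1).trans (D2hom_eq x.2.2)))

def bang : D2 ⟶ Tobj where
  f0 := fun _ => PUnit.unit
  f1 := fun _ _ _ => ⟨0, rfl⟩
  tr0 := CompComputes.const _ 0
  tr1 := CompComputes.const _ 0

lemma effFib_bang : EffFib bang := by
  constructor
  · refine ⟨fun n => Part.some n.unpair.1, fun _ => Part.some 0,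
      (Primrec.to_comp (Primrec.fst.comp Primrec.unpair)).partrec,
      (Computable.const 0).partrec, fun b a π hπ => ?_⟩
    refine ⟨b, ⟨0, D2hom_self b b rfl⟩, ?_, ?_, ?_, Part.mem_some 0⟩
    · cases a; rfl
    · exact (Set.mem_singleton_iff.mp hπ).symm
    · simp [Nat.unpair_pair, Part.mem_some_iff]
  · refine ⟨fun _ => Part.some 0, (Computable.const 0).partrec, fun b b' ρ π hπ => ?_⟩
    refine ⟨⟨0, D2hom_self b b' (D2hom_eq ρ.2)⟩, ?_, Part.mem_some 0⟩
    exact (Set.mem_singleton_iff.mp hπ).symm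

lemma effDisc_bang : EffDisc bang := by
  refine ⟨effFib_bang, D2, 𝟙 D2, bang, effEqv_id D2, ⟨effFib_bang, fun b b' _ hα => ?_⟩,
    Category.id_comp _⟩
  cases b <;> cases b' <;> simp_all [D2]

def sigD : D2 ⟶ D2 where
  f0 := fun b => !b
  f1 := fun b b' ρ => ⟨ρ.val, by
    have h := D2hom_eq ρ.2
    subst h
    cases b <;> exact ρ.2⟩
  tr0 := ⟨fun n => Part.some (1 - n),
    ((Primrec.nat_sub.comp (Primrec.const 1) Primrec.id).to_comp).partrec,
    fun b => by cases b <;> simp [D2, Part.mem_some_iff]⟩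
  tr1 := (CompComputes.projR _ _).comp (CompComputes.projR _ _)

lemma sigD_sigD : sigD ≫ sigD = 𝟙 D2 := by
  refine EffHom.ext_val (fun b => Bool.not_not b) (fun b b' ρ => rfl)

lemma effEqv_sigD : EffEqv sigD := effEqv_of_iso sigD_sigD sigD_sigD

/-! ### Category-level pullback lemmas -/

section PBcat
universe vv uu
variable {C : Type uu} [Category.{vv} C]

lemma IsPB.swap {P X Y Z : C} {p₁ : P ⟶ X} {p₂ : P ⟶ Y} {f : X ⟶ Z} {g : Y ⟶ Z}
    (h : IsPB p₁ p₂ f g) : IsPB p₂ p₁ g f := by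
  obtain ⟨hc, hu⟩ := h
  refine ⟨hc.symm, fun Q q₁ q₂ hq => ?_⟩
  obtain ⟨m, ⟨hm1, hm2⟩, hmu⟩ := hu Q q₂ q₁ hq.symm
  exact ⟨m, ⟨hm2, hm1⟩, fun y hy => hmu y ⟨hy.2, hy.1⟩⟩

lemma isPB_iso {P Q X Y Z : C} {p₁ : P ⟶ X} {p₂ : P ⟶ Y} {q₁ : Q ⟶ X} {q₂ : Q ⟶ Y}
    {f : X ⟶ Z} {g : Y ⟶ Z} (hP : IsPB p₁ p₂ f g) (hQ : IsPB q₁ q₂ f g) :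
    ∃ (ι : P ⟶ Q) (κ : Q ⟶ P), ι ≫ q₁ = p₁ ∧ ι ≫ q₂ = p₂ ∧ κ ≫ p₁ = q₁ ∧ κ ≫ p₂ = q₂ ∧
      ι ≫ κ = 𝟙 P ∧ κ ≫ ι = 𝟙 Q := by
  obtain ⟨ι, ⟨hι1, hι2⟩, _⟩ := hQ.2 P p₁ p₂ hP.1
  obtain ⟨κ, ⟨hκ1, hκ2⟩, _⟩ := hP.2 Q q₁ q₂ hQ.1
  obtain ⟨mP, _, hmuP⟩ := hP.2 P p₁ p₂ hP.1
  obtain ⟨mQ, _, hmuQ⟩ := hQ.2 Q q₁ q₂ hQ.1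
  refine ⟨ι, κ, hι1, hι2, hκ1, hκ2, ?_, ?_⟩
  · have e1 := hmuP (ι ≫ κ) ⟨by rw [Category.assoc, hκ1, hι1], by rw [Category.assoc, hκ2, hι2]⟩
    have e2 := hmuP (𝟙 P) ⟨Category.id_comp _, Category.id_comp _⟩
    rw [e1, e2]
  · have e1 := hmuQ (κ ≫ ι) ⟨by rw [Category.assoc, hι1, hκ1], by rw [Category.assoc, hι2, hκ2]⟩
    have e2 := hmuQ (𝟙 Q) ⟨Category.id_comp _, Category.id_comp _⟩
    rw [e1, e2]

end PBcat

/-! ### Extracting pointwise cells from an abstract fibrewise homotopy -/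

lemma fibHomotopic_pointwise {Ctot I B : EffObj} {pp : Ctot ⟶ I} {W W' : B ⟶ Ctot}
    (h : FibHomotopic EffPS pp W W') :
    ∀ x : B.A, ∃ m, m ∈ Ctot.hom (EffHom.f0 W x) (EffHom.f0 W' x) := by
  obtain ⟨PX, r, s, t, ⟨hre, hrs, hrt, -, -⟩, Hh, hHs, hHt⟩ := h
  intro x
  obtain ⟨g, _, hgr⟩ := hre
  set ξ := EffHom.f0 Hh x with hξ
  obtain ⟨kθ, hkθ0⟩ := hgr.pointwise ξ
  have hkθ : kθ ∈ PX.hom (EffHom.f0 r (EffHom.f0 g ξ)) ξ := hkθ0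
  obtain ⟨vs, hs0⟩ : ∃ m, m ∈ Ctot.hom (EffHom.f0 s (EffHom.f0 r (EffHom.f0 g ξ))) (EffHom.f0 s ξ) :=
    ⟨_, (EffHom.f1 s _ _ ⟨kθ, hkθ⟩).2⟩
  obtain ⟨vt, ht0⟩ : ∃ m, m ∈ Ctot.hom (EffHom.f0 t (EffHom.f0 r (EffHom.f0 g ξ))) (EffHom.f0 t ξ) :=
    ⟨_, (EffHom.f1 t _ _ ⟨kθ, hkθ⟩).2⟩
  have hsr : ∀ z, EffHom.f0 s (EffHom.f0 r z) = z := fun z => f0_congr hrs z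
  have htr : ∀ z, EffHom.f0 t (EffHom.f0 r z) = z := fun z => f0_congr hrt z
  rw [hsr] at hs0
  rw [htr] at ht0
  obtain ⟨m1, hm1⟩ := Ctot.inv_pointwise hs0
  obtain ⟨m2, hm2⟩ := Ctot.comp_pointwise hm1 ht0
  have h1 : EffHom.f0 s ξ = EffHom.f0 W x := f0_congr hHs x
  have h2 : EffHom.f0 t ξ = EffHom.f0 W' x := f0_congr hHt x
  rw [h1, h2] at hm2
  exact ⟨m2, hm2⟩

/-! ### Concrete pullbacks along a fibration -/

section PBF

variable {Z Y X : EffObj} (f : Z ⟶ X) (p : Y ⟶ X)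

def PBA : Type := {q : Z.A × Y.A // EffHom.f0 f q.1 = EffHom.f0 p q.2}

def PBα (q : PBA f p) : ℕ := Nat.pair (Z.α q.1.1) (Y.α q.1.2)

def PBhom (q q' : PBA f p) : Set ℕ :=
  {m | m.unpair.1 ∈ Z.hom q.1.1 q'.1.1 ∧ m.unpair.2 ∈ Y.hom q.1.2 q'.1.2 ∧
    ∀ (h1 : m.unpair.1 ∈ Z.hom q.1.1 q'.1.1) (h2 : m.unpair.2 ∈ Y.hom q.1.2 q'.1.2),
      (EffHom.f1 f _ _ ⟨m.unpair.1, h1⟩).val = (EffHom.f1 p _ _ ⟨m.unpair.2, h2⟩).val}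

lemma PBhom_intro {q q' : PBA f p} {a b : ℕ} (h1 : a ∈ Z.hom q.1.1 q'.1.1)
    (h2 : b ∈ Y.hom q.1.2 q'.1.2)
    (he : (EffHom.f1 f _ _ ⟨a, h1⟩).val = (EffHom.f1 p _ _ ⟨b, h2⟩).val) :
    Nat.pair a b ∈ PBhom f p q q' := by
  simp only [PBhom, Set.mem_setOf_eq, Nat.unpair_pair]
  exact ⟨h1, h2, fun _ _ => he⟩

lemma mem_hom_cast {V : EffObj} {a b a' b' : V.A} {m : ℕ} (hm : m ∈ V.hom a b)
    (ha : a = a') (hb : b = b') : m ∈ V.hom a' b' := by subst ha; subst hb; exact hm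

/-- The "retuning" machine: given a cell in `Y` and a prescribed cell downstairs,
find a parallel cell in `Y` mapping to it. -/
lemma PB_retune (hp : EffFib p) :
    CompFinds
      (fun x : {x : Y.A × Y.A × ℕ × ℕ // x.2.2.1 ∈ Y.hom x.1 x.2.1 ∧
          x.2.2.2 ∈ X.hom (EffHom.f0 p x.1) (EffHom.f0 p x.2.1)} =>
        Nat.pair (Y.α x.1.1) (Nat.pair (Y.α x.1.2.1) (Nat.pair x.1.2.2.1 x.1.2.2.2)))
      (fun x => {m | ∃ h2 : m ∈ Y.hom x.1.1 x.1.2.1,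
          (EffHom.f1 p _ _ ⟨m, h2⟩).val = x.1.2.2.2}) := by
  obtain ⟨-, χ, pχ, hχ⟩ := hp
  refine ⟨χ, pχ, fun x => ?_⟩
  obtain ⟨ρ', h1, h2⟩ := hχ x.1.1 x.1.2.1 ⟨x.1.2.2.1, x.2.1⟩ x.1.2.2.2 x.2.2
  exact ⟨ρ'.val, h2, ρ'.2, h1⟩

lemma PB_idc (hp : EffFib p) :
    CompFinds (fun q : PBA f p => PBα f p q) (fun q => PBhom f p q q) := by
  obtain ⟨oz, hoz, toz⟩ := Z.idc.toComputes
  obtain ⟨oy, hoy, toy⟩ := Y.idc.toComputes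
  obtain ⟨og, hog, tog⟩ := (PB_retune p hp).toComputes
  have cz : CompComputes (fun q : PBA f p => PBα f p q) (fun q => Z.α q.1.1) :=
    CompComputes.projL _ _
  have cy : CompComputes (fun q : PBA f p => PBα f p q) (fun q => Y.α q.1.2) :=
    CompComputes.projR _ _
  have hfv : CompComputes (fun q : PBA f p => PBα f p q)
      (fun q => (EffHom.f1 f _ _ ⟨oz q.1.1, hoz q.1.1⟩).val) :=
    (f.tr1.precomp (fun q : PBA f p => ⟨q.1.1, q.1.1, ⟨oz q.1.1, hoz q.1.1⟩⟩)).comp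
      (CompComputes.pair cz (CompComputes.pair cz ((toz.precomp _).comp cz)))
  have hmem : ∀ q : PBA f p,
      (EffHom.f1 f _ _ ⟨oz q.1.1, hoz q.1.1⟩).val ∈
        X.hom (EffHom.f0 p q.1.2) (EffHom.f0 p q.1.2) := by
    intro q
    exact mem_hom_cast (EffHom.f1 f _ _ ⟨oz q.1.1, hoz q.1.1⟩).2 q.2 q.2
  have cg : CompComputes (fun q : PBA f p => PBα f p q)
      (fun q => og ⟨(q.1.2, q.1.2, oy q.1.2, (EffHom.f1 f _ _ ⟨oz q.1.1, hoz q.1.1⟩).val),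
        hoy q.1.2, hmem q⟩) :=
    (tog.precomp _).comp
      (CompComputes.pair cy (CompComputes.pair cy
        (CompComputes.pair ((toy.precomp _).comp cy) hfv)))
  refine (CompComputes.pair ((toz.precomp _).comp cz) cg).toFinds ?_
  intro q
  obtain ⟨hg2, hgeq⟩ :=
    hog ⟨(q.1.2, q.1.2, oy q.1.2, (EffHom.f1 f _ _ ⟨oz q.1.1, hoz q.1.1⟩).val),
      hoy q.1.2, hmem q⟩
  exact PBhom_intro f p (hoz q.1.1) hg2 hgeq.symm

lemma PB_invc (hp : EffFib p) :
    CompFinds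
      (fun x : {x : PBA f p × PBA f p × ℕ // x.2.2 ∈ PBhom f p x.1 x.2.1} =>
        Nat.pair (PBα f p x.1.1) (Nat.pair (PBα f p x.1.2.1) x.1.2.2))
      (fun x => PBhom f p x.1.2.1 x.1.1) := by
  obtain ⟨ozi, hozi, tozi⟩ := Z.invc.toComputes
  obtain ⟨oyi, hoyi, toyi⟩ := Y.invc.toComputes
  obtain ⟨og, hog, tog⟩ := (PB_retune p hp).toComputes
  set I := fun x : {x : PBA f p × PBA f p × ℕ // x.2.2 ∈ PBhom f p x.1 x.2.1} =>
    Nat.pair (PBα f p x.1.1) (Nat.pair (PBα f p x.1.2.1) x.1.2.2) with hI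
  have cq : CompComputes I (fun x => PBα f p x.1.1) := CompComputes.projL _ _
  have cq' : CompComputes I (fun x => PBα f p x.1.2.1) :=
    (CompComputes.projL _ _).comp (CompComputes.projR _ _)
  have cm : CompComputes I (fun x => x.1.2.2) :=
    (CompComputes.projR _ _).comp (CompComputes.projR _ _)
  have cz : CompComputes I (fun x => Z.α x.1.1.1.1) := (CompComputes.projL _ _).comp cq
  have cy : CompComputes I (fun x => Y.α x.1.1.1.2) := (CompComputes.projR _ _).comp cq
  have cz' : CompComputes I (fun x => Z.α x.1.2.1.1.1) := (CompComputes.projL _ _).comp cq'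
  have cy' : CompComputes I (fun x => Y.α x.1.2.1.1.2) := (CompComputes.projR _ _).comp cq'
  have cmz : CompComputes I (fun x => x.1.2.2.unpair.1) := (CompComputes.unpairL _).comp cm
  have cmy : CompComputes I (fun x => x.1.2.2.unpair.2) := (CompComputes.unpairR _).comp cm
  have cozi : CompComputes I
      (fun x => ozi ⟨(x.1.1.1.1, x.1.2.1.1.1, x.1.2.2.unpair.1), x.2.1⟩) :=
    (tozi.precomp _).comp (CompComputes.pair cz (CompComputes.pair cz' cmz))
  have cfv : CompComputes I
      (fun x => (EffHom.f1 f _ _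
        ⟨ozi ⟨(x.1.1.1.1, x.1.2.1.1.1, x.1.2.2.unpair.1), x.2.1⟩,
         hozi ⟨(x.1.1.1.1, x.1.2.1.1.1, x.1.2.2.unpair.1), x.2.1⟩⟩).val) :=
    (f.tr1.precomp (fun x : {x : PBA f p × PBA f p × ℕ // x.2.2 ∈ PBhom f p x.1 x.2.1} =>
      ⟨x.1.2.1.1.1, x.1.1.1.1,
      ⟨ozi ⟨(x.1.1.1.1, x.1.2.1.1.1, x.1.2.2.unpair.1), x.2.1⟩,
       hozi ⟨(x.1.1.1.1, x.1.2.1.1.1, x.1.2.2.unpair.1), x.2.1⟩⟩⟩)).comp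
      (CompComputes.pair cz' (CompComputes.pair cz cozi))
  have coyi : CompComputes I
      (fun x => oyi ⟨(x.1.1.1.2, x.1.2.1.1.2, x.1.2.2.unpair.2), x.2.2.1⟩) :=
    (toyi.precomp _).comp (CompComputes.pair cy (CompComputes.pair cy' cmy))
  have hmem : ∀ x : {x : PBA f p × PBA f p × ℕ // x.2.2 ∈ PBhom f p x.1 x.2.1},
      (EffHom.f1 f _ _
        ⟨ozi ⟨(x.1.1.1.1, x.1.2.1.1.1, x.1.2.2.unpair.1), x.2.1⟩,
         hozi ⟨(x.1.1.1.1, x.1.2.1.1.1, x.1.2.2.unpair.1), x.2.1⟩⟩).val ∈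
        X.hom (EffHom.f0 p x.1.2.1.1.2) (EffHom.f0 p x.1.1.1.2) := by
    intro x
    exact mem_hom_cast (EffHom.f1 f _ _
      ⟨ozi ⟨(x.1.1.1.1, x.1.2.1.1.1, x.1.2.2.unpair.1), x.2.1⟩,
       hozi ⟨(x.1.1.1.1, x.1.2.1.1.1, x.1.2.2.unpair.1), x.2.1⟩⟩).2 x.1.2.1.2 x.1.1.2
  have cg : CompComputes I (fun x =>
      og ⟨(x.1.2.1.1.2, x.1.1.1.2,
            oyi ⟨(x.1.1.1.2, x.1.2.1.1.2, x.1.2.2.unpair.2), x.2.2.1⟩,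
            (EffHom.f1 f _ _
              ⟨ozi ⟨(x.1.1.1.1, x.1.2.1.1.1, x.1.2.2.unpair.1), x.2.1⟩,
               hozi ⟨(x.1.1.1.1, x.1.2.1.1.1, x.1.2.2.unpair.1), x.2.1⟩⟩).val),
          hoyi ⟨(x.1.1.1.2, x.1.2.1.1.2, x.1.2.2.unpair.2), x.2.2.1⟩, hmem x⟩) :=
    (tog.precomp _).comp
      (CompComputes.pair cy' (CompComputes.pair cy (CompComputes.pair coyi cfv)))
  refine (CompComputes.pair cozi cg).toFinds ?_
  intro x
  obtain ⟨hg2, hgeq⟩ := hog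
    ⟨(x.1.2.1.1.2, x.1.1.1.2,
        oyi ⟨(x.1.1.1.2, x.1.2.1.1.2, x.1.2.2.unpair.2), x.2.2.1⟩,
        (EffHom.f1 f _ _
          ⟨ozi ⟨(x.1.1.1.1, x.1.2.1.1.1, x.1.2.2.unpair.1), x.2.1⟩,
           hozi ⟨(x.1.1.1.1, x.1.2.1.1.1, x.1.2.2.unpair.1), x.2.1⟩⟩).val),
      hoyi ⟨(x.1.1.1.2, x.1.2.1.1.2, x.1.2.2.unpair.2), x.2.2.1⟩, hmem x⟩
  exact PBhom_intro f p (hozi ⟨(x.1.1.1.1, x.1.2.1.1.1, x.1.2.2.unpair.1), x.2.1⟩) hg2 hgeq.symm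

lemma PB_compc (hp : EffFib p) :
    CompFinds
      (fun x : {x : PBA f p × PBA f p × PBA f p × ℕ × ℕ //
          x.2.2.2.1 ∈ PBhom f p x.1 x.2.1 ∧ x.2.2.2.2 ∈ PBhom f p x.2.1 x.2.2.1} =>
        Nat.pair (PBα f p x.1.1) (Nat.pair (PBα f p x.1.2.1) (Nat.pair (PBα f p x.1.2.2.1)
          (Nat.pair x.1.2.2.2.1 x.1.2.2.2.2))))
      (fun x => PBhom f p x.1.1 x.1.2.2.1) := by
  obtain ⟨ozc, hozc, tozc⟩ := Z.compc.toComputes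
  obtain ⟨oyc, hoyc, toyc⟩ := Y.compc.toComputes
  obtain ⟨og, hog, tog⟩ := (PB_retune p hp).toComputes
  set I := fun x : {x : PBA f p × PBA f p × PBA f p × ℕ × ℕ //
      x.2.2.2.1 ∈ PBhom f p x.1 x.2.1 ∧ x.2.2.2.2 ∈ PBhom f p x.2.1 x.2.2.1} =>
    Nat.pair (PBα f p x.1.1) (Nat.pair (PBα f p x.1.2.1) (Nat.pair (PBα f p x.1.2.2.1)
      (Nat.pair x.1.2.2.2.1 x.1.2.2.2.2))) with hI
  have cq : CompComputes I (fun x => PBα f p x.1.1) := CompComputes.projL _ _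
  have crest : CompComputes I (fun x => Nat.pair (PBα f p x.1.2.1)
      (Nat.pair (PBα f p x.1.2.2.1) (Nat.pair x.1.2.2.2.1 x.1.2.2.2.2))) :=
    CompComputes.projR _ _
  have cq' : CompComputes I (fun x => PBα f p x.1.2.1) :=
    (CompComputes.projL _ _).comp crest
  have crest2 : CompComputes I (fun x => Nat.pair (PBα f p x.1.2.2.1)
      (Nat.pair x.1.2.2.2.1 x.1.2.2.2.2)) := (CompComputes.projR _ _).comp crest
  have cq'' : CompComputes I (fun x => PBα f p x.1.2.2.1) :=
    (CompComputes.projL _ _).comp crest2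
  have cms : CompComputes I (fun x => Nat.pair x.1.2.2.2.1 x.1.2.2.2.2) :=
    (CompComputes.projR _ _).comp crest2
  have cm1 : CompComputes I (fun x => x.1.2.2.2.1) := (CompComputes.projL _ _).comp cms
  have cm2 : CompComputes I (fun x => x.1.2.2.2.2) := (CompComputes.projR _ _).comp cms
  have cz : CompComputes I (fun x => Z.α x.1.1.1.1) := (CompComputes.projL _ _).comp cq
  have cy : CompComputes I (fun x => Y.α x.1.1.1.2) := (CompComputes.projR _ _).comp cq
  have cz' : CompComputes I (fun x => Z.α x.1.2.1.1.1) := (CompComputes.projL _ _).comp cq'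
  have cy' : CompComputes I (fun x => Y.α x.1.2.1.1.2) := (CompComputes.projR _ _).comp cq'
  have cz'' : CompComputes I (fun x => Z.α x.1.2.2.1.1.1) := (CompComputes.projL _ _).comp cq''
  have cy'' : CompComputes I (fun x => Y.α x.1.2.2.1.1.2) := (CompComputes.projR _ _).comp cq''
  have cm1z : CompComputes I (fun x => x.1.2.2.2.1.unpair.1) := (CompComputes.unpairL _).comp cm1
  have cm1y : CompComputes I (fun x => x.1.2.2.2.1.unpair.2) := (CompComputes.unpairR _).comp cm1
  have cm2z : CompComputes I (fun x => x.1.2.2.2.2.unpair.1) := (CompComputes.unpairL _).comp cm2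
  have cm2y : CompComputes I (fun x => x.1.2.2.2.2.unpair.2) := (CompComputes.unpairR _).comp cm2
  have cozc : CompComputes I (fun x =>
      ozc ⟨(x.1.1.1.1, x.1.2.1.1.1, x.1.2.2.1.1.1, x.1.2.2.2.1.unpair.1,
        x.1.2.2.2.2.unpair.1), x.2.1.1, x.2.2.1⟩) :=
    (tozc.precomp _).comp
      (CompComputes.pair cz (CompComputes.pair cz' (CompComputes.pair cz''
        (CompComputes.pair cm1z cm2z))))
  have coyc : CompComputes I (fun x =>
      oyc ⟨(x.1.1.1.2, x.1.2.1.1.2, x.1.2.2.1.1.2, x.1.2.2.2.1.unpair.2,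
        x.1.2.2.2.2.unpair.2), x.2.1.2.1, x.2.2.2.1⟩) :=
    (toyc.precomp _).comp
      (CompComputes.pair cy (CompComputes.pair cy' (CompComputes.pair cy''
        (CompComputes.pair cm1y cm2y))))
  have cfv : CompComputes I
      (fun x => (EffHom.f1 f _ _
        ⟨ozc ⟨(x.1.1.1.1, x.1.2.1.1.1, x.1.2.2.1.1.1, x.1.2.2.2.1.unpair.1,
            x.1.2.2.2.2.unpair.1), x.2.1.1, x.2.2.1⟩,
         hozc ⟨(x.1.1.1.1, x.1.2.1.1.1, x.1.2.2.1.1.1, x.1.2.2.2.1.unpair.1,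
            x.1.2.2.2.2.unpair.1), x.2.1.1, x.2.2.1⟩⟩).val) :=
    (f.tr1.precomp (fun x : {x : PBA f p × PBA f p × PBA f p × ℕ × ℕ //
        x.2.2.2.1 ∈ PBhom f p x.1 x.2.1 ∧ x.2.2.2.2 ∈ PBhom f p x.2.1 x.2.2.1} =>
      ⟨x.1.1.1.1, x.1.2.2.1.1.1,
      ⟨ozc ⟨(x.1.1.1.1, x.1.2.1.1.1, x.1.2.2.1.1.1, x.1.2.2.2.1.unpair.1,
          x.1.2.2.2.2.unpair.1), x.2.1.1, x.2.2.1⟩,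
       hozc ⟨(x.1.1.1.1, x.1.2.1.1.1, x.1.2.2.1.1.1, x.1.2.2.2.1.unpair.1,
          x.1.2.2.2.2.unpair.1), x.2.1.1, x.2.2.1⟩⟩⟩)).comp
      (CompComputes.pair cz (CompComputes.pair cz'' cozc))
  have hmem : ∀ x : {x : PBA f p × PBA f p × PBA f p × ℕ × ℕ //
      x.2.2.2.1 ∈ PBhom f p x.1 x.2.1 ∧ x.2.2.2.2 ∈ PBhom f p x.2.1 x.2.2.1},
      (EffHom.f1 f _ _
        ⟨ozc ⟨(x.1.1.1.1, x.1.2.1.1.1, x.1.2.2.1.1.1, x.1.2.2.2.1.unpair.1,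
            x.1.2.2.2.2.unpair.1), x.2.1.1, x.2.2.1⟩,
         hozc ⟨(x.1.1.1.1, x.1.2.1.1.1, x.1.2.2.1.1.1, x.1.2.2.2.1.unpair.1,
            x.1.2.2.2.2.unpair.1), x.2.1.1, x.2.2.1⟩⟩).val ∈
        X.hom (EffHom.f0 p x.1.1.1.2) (EffHom.f0 p x.1.2.2.1.1.2) := by
    intro x
    exact mem_hom_cast (EffHom.f1 f _ _
      ⟨ozc ⟨(x.1.1.1.1, x.1.2.1.1.1, x.1.2.2.1.1.1, x.1.2.2.2.1.unpair.1,
          x.1.2.2.2.2.unpair.1), x.2.1.1, x.2.2.1⟩,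
       hozc ⟨(x.1.1.1.1, x.1.2.1.1.1, x.1.2.2.1.1.1, x.1.2.2.2.1.unpair.1,
          x.1.2.2.2.2.unpair.1), x.2.1.1, x.2.2.1⟩⟩).2 x.1.1.2 x.1.2.2.1.2
  have cg : CompComputes I (fun x =>
      og ⟨(x.1.1.1.2, x.1.2.2.1.1.2,
            oyc ⟨(x.1.1.1.2, x.1.2.1.1.2, x.1.2.2.1.1.2, x.1.2.2.2.1.unpair.2,
              x.1.2.2.2.2.unpair.2), x.2.1.2.1, x.2.2.2.1⟩,
            (EffHom.f1 f _ _
              ⟨ozc ⟨(x.1.1.1.1, x.1.2.1.1.1, x.1.2.2.1.1.1, x.1.2.2.2.1.unpair.1,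
                  x.1.2.2.2.2.unpair.1), x.2.1.1, x.2.2.1⟩,
               hozc ⟨(x.1.1.1.1, x.1.2.1.1.1, x.1.2.2.1.1.1, x.1.2.2.2.1.unpair.1,
                  x.1.2.2.2.2.unpair.1), x.2.1.1, x.2.2.1⟩⟩).val),
          hoyc ⟨(x.1.1.1.2, x.1.2.1.1.2, x.1.2.2.1.1.2, x.1.2.2.2.1.unpair.2,
            x.1.2.2.2.2.unpair.2), x.2.1.2.1, x.2.2.2.1⟩, hmem x⟩) :=
    (tog.precomp _).comp
      (CompComputes.pair cy (CompComputes.pair cy'' (CompComputes.pair coyc cfv)))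
  refine (CompComputes.pair cozc cg).toFinds ?_
  intro x
  obtain ⟨hg2, hgeq⟩ := hog
    ⟨(x.1.1.1.2, x.1.2.2.1.1.2,
        oyc ⟨(x.1.1.1.2, x.1.2.1.1.2, x.1.2.2.1.1.2, x.1.2.2.2.1.unpair.2,
          x.1.2.2.2.2.unpair.2), x.2.1.2.1, x.2.2.2.1⟩,
        (EffHom.f1 f _ _
          ⟨ozc ⟨(x.1.1.1.1, x.1.2.1.1.1, x.1.2.2.1.1.1, x.1.2.2.2.1.unpair.1,
              x.1.2.2.2.2.unpair.1), x.2.1.1, x.2.2.1⟩,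
           hozc ⟨(x.1.1.1.1, x.1.2.1.1.1, x.1.2.2.1.1.1, x.1.2.2.2.1.unpair.1,
              x.1.2.2.2.2.unpair.1), x.2.1.1, x.2.2.1⟩⟩).val),
      hoyc ⟨(x.1.1.1.2, x.1.2.1.1.2, x.1.2.2.1.1.2, x.1.2.2.2.1.unpair.2,
        x.1.2.2.2.2.unpair.2), x.2.1.2.1, x.2.2.2.1⟩, hmem x⟩
  exact PBhom_intro f p (hozc ⟨(x.1.1.1.1, x.1.2.1.1.1, x.1.2.2.1.1.1, x.1.2.2.2.1.unpair.1,
    x.1.2.2.2.2.unpair.1), x.2.1.1, x.2.2.1⟩) hg2 hgeq.symm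

def PBobj (hp : EffFib p) : EffObj where
  A := PBA f p
  α := PBα f p
  hom := PBhom f p
  idc := PB_idc f p hp
  invc := PB_invc f p hp
  compc := PB_compc f p hp

def PBpr1 (hp : EffFib p) : PBobj f p hp ⟶ Z where
  f0 := fun q => q.1.1
  f1 := fun _ _ m => ⟨m.val.unpair.1, m.2.1⟩
  tr0 := CompComputes.projL _ _
  tr1 := (CompComputes.unpairL _).comp
    ((CompComputes.projR _ _).comp (CompComputes.projR _ _))

def PBpr2 (hp : EffFib p) : PBobj f p hp ⟶ Y where
  f0 := fun q => q.1.2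
  f1 := fun _ _ m => ⟨m.val.unpair.2, m.2.2.1⟩
  tr0 := CompComputes.projR _ _
  tr1 := (CompComputes.unpairR _).comp
    ((CompComputes.projR _ _).comp (CompComputes.projR _ _))

lemma PB_square (hp : EffFib p) : PBpr1 f p hp ≫ f = PBpr2 f p hp ≫ p :=
  EffHom.ext_val (fun q => q.2) (fun _ _ m => m.2.2.2 m.2.1 m.2.2.1)

def PBmed (hp : EffFib p) {Q' : EffObj} (u₁ : Q' ⟶ Z) (u₂ : Q' ⟶ Y)
    (hcomm : u₁ ≫ f = u₂ ≫ p) : Q' ⟶ PBobj f p hp where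
  f0 := fun x => ⟨(EffHom.f0 u₁ x, EffHom.f0 u₂ x), f0_congr hcomm x⟩
  f1 := fun b b' ρ => ⟨Nat.pair (EffHom.f1 u₁ _ _ ρ).val (EffHom.f1 u₂ _ _ ρ).val,
    PBhom_intro f p (EffHom.f1 u₁ _ _ ρ).2 (EffHom.f1 u₂ _ _ ρ).2
      (f1_val_congr hcomm b b' ρ)⟩
  tr0 := CompComputes.pair u₁.tr0 u₂.tr0
  tr1 := CompComputes.pair u₁.tr1 u₂.tr1

lemma PB_isPB (hp : EffFib p) : IsPB (PBpr1 f p hp) (PBpr2 f p hp) f p := by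
  refine ⟨PB_square f p hp, fun Q' u₁ u₂ hcomm => ?_⟩
  refine ⟨PBmed f p hp u₁ u₂ hcomm, ⟨?_, ?_⟩, ?_⟩
  · refine EffHom.ext_val (fun b => rfl) (fun b b' ρ => ?_)
    show (Nat.pair _ _).unpair.1 = _
    rw [Nat.unpair_pair]
  · refine EffHom.ext_val (fun b => rfl) (fun b b' ρ => ?_)
    show (Nat.pair _ _).unpair.2 = _
    rw [Nat.unpair_pair]
  · rintro h' ⟨hh1, hh2⟩
    refine EffHom.ext_val (fun b => ?_) (fun b b' ρ => ?_)
    · refine Subtype.ext (Prod.ext ?_ ?_)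
      · exact f0_congr hh1 b
      · exact f0_congr hh2 b
    · show (EffHom.f1 h' b b' ρ).val = Nat.pair _ _
      rw [← Nat.pair_unpair (EffHom.f1 h' b b' ρ).val]
      congr 1
      · exact f1_val_congr hh1 b b' ρ
      · exact f1_val_congr hh2 b b' ρ

end PBF

/-- The class of discrete fibrations in the path category `EFF`
does not have a univalent representation. -/
theorem EFF_no_univalent_representation_of_discrete :
    ¬ ∃ (E U : EffObj) (π : E ⟶ U),
        IsRepresentation EffPS (fun {_ _} f => EffDisc f) π ∧ Univalent EffPS π := by
  rintro ⟨E, U, π, ⟨hπdisc, hrep⟩, huni⟩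
  have hπfib : EffFib π := hπdisc.1
  obtain ⟨c, top, hbc, P, p₁, p₂, hv, hPBrep, hvp1, hvp2, hveq⟩ := hrep bang effDisc_bang
  set Zf := PBobj c π hπfib with hZfdef
  set a₁ := PBpr1 c π hπfib with ha₁def
  set a₂ := PBpr2 c π hπfib with ha₂def
  have hPB : IsPB a₁ a₂ c π := PB_isPB c π hπfib
  obtain ⟨toZf, toP, hta1, hta2, htp1, htp2, hPZ, hZP⟩ := isPB_iso hPBrep hPB
  set hc : D2 ⟶ Zf := hv ≫ toZf with hcdef
  have hc_eqv : EffEqv hc := EffEqv.comp' (show EffEqv hv from hveq) (effEqv_of_iso hPZ hZP)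
  obtain ⟨eb, heb1, heb2⟩ := hc_eqv
  have hebhc : ∀ n : Bool, EffHom.f0 eb (EffHom.f0 hc n) = n := by
    intro n
    obtain ⟨m, hm⟩ := heb1.pointwise n
    exact D2hom_eq hm
  set σP : Zf ⟶ Zf := eb ≫ sigD ≫ hc with hσdef
  have hσeqv : EffEqv σP :=
    EffEqv.comp' ⟨hc, heb2, heb1⟩ (EffEqv.comp' effEqv_sigD ⟨eb, heb1, heb2⟩)
  have hσa₁ : σP ≫ a₁ = a₁ := T_hom_unique _ _
  obtain ⟨PX, Q, r, s, t, q₁, q₂, Γ, H, k, w', hpo, hQpb, htrans, hHs, hHt, hk1, hk2,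
    hw1, hw2, hfibh⟩ := huni c c a₁ a₂ a₁ a₂ hPB hPB σP hσa₁ hσeqv
  obtain ⟨hre, hrs, hrt, -⟩ := hpo
  obtain ⟨hΓπ, hunit0⟩ := htrans
  have hjcone : (𝟙 E) ≫ π = (π ≫ r) ≫ s := by
    rw [Category.id_comp, Category.assoc, hrs, Category.comp_id]
  obtain ⟨j, ⟨hj1, hj2⟩, -⟩ := hQpb.2 E (𝟙 E) (π ≫ r) hjcone
  have hunit := hunit0 j hj1 hj2
  set Qc := PBobj s π hπfib with hQcdef
  set d₁ := PBpr1 s π hπfib with hd₁def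
  set d₂ := PBpr2 s π hπfib with hd₂def
  have hQcPB : IsPB d₂ d₁ π s := (PB_isPB s π hπfib).swap
  obtain ⟨ιQ, κQ, hι1, hι2, hκ1, hκ2, hικ, hκι⟩ := isPB_iso hQcPB hQpb
  set x : PBA c π := EffHom.f0 hc true with hxdef
  set x' : PBA c π := EffHom.f0 hc false with hx'def
  set e : E.A := x.1.2 with hedef
  set e₁ : E.A := x'.1.2 with he₁def
  set yk := EffHom.f0 k x with hykdef
  have hyk1 : EffHom.f0 q₁ yk = e := f0_congr hk1 x
  set yhat : PBA s π := EffHom.f0 κQ yk with hyhatdef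
  set phat : PX.A := yhat.1.1 with hphatdef
  have hyhat2 : yhat.1.2 = e := by
    have h1 : EffHom.f0 d₂ yhat = EffHom.f0 q₁ yk := f0_congr hκ1 yk
    rw [hyk1] at h1
    exact h1
  obtain ⟨gr, -, hgr2⟩ := hre
  set v : U.A := EffHom.f0 gr phat with hvdef
  obtain ⟨kθ, hkθ0⟩ := hgr2.pointwise phat
  have hkθ : kθ ∈ PX.hom (EffHom.f0 r v) phat := hkθ0
  obtain ⟨χv, hχv⟩ := PX.inv_pointwise hkθ
  have hsrv : EffHom.f0 s (EffHom.f0 r v) = v := f0_congr hrs v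
  have hsphat : EffHom.f0 s phat = EffHom.f0 π e := by
    have h := yhat.2
    rw [hyhat2] at h
    exact h
  obtain ⟨φ, ψ, -, -, hlift⟩ := hπfib.1
  have hχUmem : (EffHom.f1 s _ _ ⟨χv, hχv⟩).val ∈ U.hom (EffHom.f0 π e) v :=
    mem_hom_cast (EffHom.f1 s _ _ ⟨χv, hχv⟩).2 hsphat hsrv
  obtain ⟨e', ρ, he'1, he'2, -, -⟩ := hlift e v (EffHom.f1 s _ _ ⟨χv, hχv⟩).val hχUmem
  have hprop : EffHom.f0 s phat = EffHom.f0 π e := hsphat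
  set yhat₀ : PBA s π := ⟨(phat, e), hprop⟩ with hyhat₀def
  have hyhateq : yhat = yhat₀ := Subtype.ext (Prod.ext rfl hyhat2)
  set yhat' : PBA s π := ⟨(EffHom.f0 r v, e'), by rw [hsrv, he'1]⟩ with hyhat'def
  have hchatmem : Nat.pair χv ρ.val ∈ PBhom s π yhat₀ yhat' :=
    PBhom_intro s π (q := yhat₀) (q' := yhat') hχv ρ.2 he'2.symm
  have hchatmem' : Nat.pair χv ρ.val ∈ PBhom s π yhat yhat' := by rw [hyhateq]; exact hchatmem
  set chat : Qc.Cell yhat yhat' := ⟨Nat.pair χv ρ.val, hchatmem'⟩ with hchatdef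
  set cQ := EffHom.f1 ιQ _ _ chat with hcQdef
  have hιyhat : EffHom.f0 ιQ yhat = yk := by
    have h1 : EffHom.f0 ιQ (EffHom.f0 κQ yk) = yk := f0_congr hκι yk
    exact h1
  set y' := EffHom.f0 ιQ yhat' with hy'def
  have hγ1 : (EffHom.f1 Γ _ _ cQ).val ∈ E.hom (EffHom.f0 Γ yk) (EffHom.f0 Γ y') :=
    mem_hom_cast (EffHom.f1 Γ _ _ cQ).2 (congrArg (EffHom.f0 Γ) hιyhat) rfl
  have hje' : EffHom.f0 j e' = y' := by
    have hκj : EffHom.f0 κQ (EffHom.f0 j e') = yhat' := by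
      refine Subtype.ext (Prod.ext ?_ ?_)
      · have ha : EffHom.f0 d₁ (EffHom.f0 κQ (EffHom.f0 j e')) =
            EffHom.f0 q₂ (EffHom.f0 j e') := f0_congr hκ2 (EffHom.f0 j e')
        have hb : EffHom.f0 q₂ (EffHom.f0 j e') = EffHom.f0 r (EffHom.f0 π e') :=
          f0_congr hj2 e'
        show (EffHom.f0 κQ (EffHom.f0 j e')).1.1 = EffHom.f0 r v
        rw [show (EffHom.f0 κQ (EffHom.f0 j e')).1.1 =
          EffHom.f0 q₂ (EffHom.f0 j e') from ha, hb, he'1]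
      · have ha : EffHom.f0 d₂ (EffHom.f0 κQ (EffHom.f0 j e')) =
            EffHom.f0 q₁ (EffHom.f0 j e') := f0_congr hκ1 (EffHom.f0 j e')
        have hb : EffHom.f0 q₁ (EffHom.f0 j e') = e' := f0_congr hj1 e'
        exact ha.trans hb
    have h2 : EffHom.f0 ιQ (EffHom.f0 κQ (EffHom.f0 j e')) = EffHom.f0 j e' :=
      f0_congr hκι _
    rw [hκj] at h2
    exact h2.symm
  obtain ⟨mu, hmu0⟩ := fibHomotopic_pointwise hunit e'
  have hmu : mu ∈ E.hom (EffHom.f0 Γ y') e' := by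
    have h : mu ∈ E.hom (EffHom.f0 Γ (EffHom.f0 j e')) e' := hmu0
    rwa [hje'] at h
  obtain ⟨mρ, hmρ⟩ := E.inv_pointwise ρ.2
  obtain ⟨mw, hmw0⟩ := fibHomotopic_pointwise hfibh x
  have hσx : EffHom.f0 σP x = x' := by
    show EffHom.f0 hc (EffHom.f0 sigD (EffHom.f0 eb (EffHom.f0 hc true))) = EffHom.f0 hc false
    rw [hebhc true]
    rfl
  have hmw : mw ∈ Zf.hom x' (EffHom.f0 w' x) := by rwa [hσx] at hmw0
  have hmw2 : mw.unpair.2 ∈ E.hom e₁ (EffHom.f0 Γ yk) := by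
    have h := hmw.2.1
    have hwx : (EffHom.f0 w' x).1.2 = EffHom.f0 Γ yk := f0_congr hw2 x
    rwa [hwx] at h
  obtain ⟨A1, hA1⟩ := E.comp_pointwise hmw2 hγ1
  obtain ⟨A2, hA2⟩ := E.comp_pointwise hA1 hmu
  obtain ⟨Lv, hLv⟩ := E.comp_pointwise hA2 hmρ
  obtain ⟨χm, -, hχm⟩ := hπfib.2
  have hmhatmem : (EffHom.f1 c _ _ (⟨0, rfl⟩ : Tobj.Cell x'.1.1 x.1.1)).val ∈
      U.hom (EffHom.f0 π e₁) (EffHom.f0 π e) :=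
    mem_hom_cast (EffHom.f1 c _ _ ⟨0, rfl⟩).2 x'.2 x.2
  obtain ⟨ρ'', hρ''1, -⟩ := hχm e₁ e ⟨Lv, hLv⟩
    (EffHom.f1 c _ _ (⟨0, rfl⟩ : Tobj.Cell x'.1.1 x.1.1)).val hmhatmem
  have hξmem : Nat.pair 0 ρ''.val ∈ PBhom c π x' x :=
    PBhom_intro c π (q := x') (q' := x) rfl ρ''.2 hρ''1.symm
  have hfinal := (EffHom.f1 eb _ _ (⟨Nat.pair 0 ρ''.val, hξmem⟩ : Zf.Cell x' x)).2
  have hfx' : EffHom.f0 eb x' = false := hebhc false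
  have hfx : EffHom.f0 eb x = true := hebhc true
  have hcontr : (false : Bool) = true := D2hom_eq (mem_hom_cast hfinal hfx' hfx)
  simp at hcontr

end EffPaper
end
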